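/- arXiv:2303.14821 — 2 statements merged into one kernel-verified Lean document; each statement's English description precedes it below -/
import Mathlib

section
/- Let n ≥ 1 and consider the square quiver with dimension vector (n₁, n₂, n₃, n₄) = (n, n, n, n+1). A weight σ = (σ₁, σ₂, σ₃, σ₄) ∈ ℤ⁴ admits a nonzero semi-invariant polynomial if and only if σ₁ + σ₂ + σ₄ ≥ 0, σ₁ + σ₃ + σ₄ ≥ 0, σ₄ ≤ 0, and n σ₁ + n σ₂ + n σ₃ + (n+1) σ₄ = 0. -/
/-- Variables: entries of the four matrices attached to the arrows
`1 → 2`, `1 → 3`, `2 → 4`, `3 → 4` of the square quiver. -/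
abbrev SqVars (n₁ n₂ n₃ n₄ : ℕ) :=
  (Fin n₂ × Fin n₁) ⊕ (Fin n₃ × Fin n₁) ⊕ (Fin n₄ × Fin n₂) ⊕ (Fin n₄ × Fin n₃)

/-- Evaluate a polynomial in the matrix entries at a representation `(v₁, v₂, v₃, v₄)`. -/
noncomputable def sqEval {n₁ n₂ n₃ n₄ : ℕ} (f : MvPolynomial (SqVars n₁ n₂ n₃ n₄) ℂ)
    (v₁ : Matrix (Fin n₂) (Fin n₁) ℂ) (v₂ : Matrix (Fin n₃) (Fin n₁) ℂ)
    (v₃ : Matrix (Fin n₄) (Fin n₂) ℂ) (v₄ : Matrix (Fin n₄) (Fin n₃) ℂ) : ℂ :=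
  MvPolynomial.eval
    (Sum.elim (fun p => v₁ p.1 p.2) <| Sum.elim (fun p => v₂ p.1 p.2) <|
      Sum.elim (fun p => v₃ p.1 p.2) (fun p => v₄ p.1 p.2)) f

/-- `f` is a semi-invariant of weight `(σ₁, σ₂, σ₃, σ₄)` for the square quiver. -/
def IsSqSemiInvariant {n₁ n₂ n₃ n₄ : ℕ} (σ₁ σ₂ σ₃ σ₄ : ℤ)
    (f : MvPolynomial (SqVars n₁ n₂ n₃ n₄) ℂ) : Prop :=
  ∀ (g₁ : (Matrix (Fin n₁) (Fin n₁) ℂ)ˣ) (g₂ : (Matrix (Fin n₂) (Fin n₂) ℂ)ˣ)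
    (g₃ : (Matrix (Fin n₃) (Fin n₃) ℂ)ˣ) (g₄ : (Matrix (Fin n₄) (Fin n₄) ℂ)ˣ)
    (v₁ : Matrix (Fin n₂) (Fin n₁) ℂ) (v₂ : Matrix (Fin n₃) (Fin n₁) ℂ)
    (v₃ : Matrix (Fin n₄) (Fin n₂) ℂ) (v₄ : Matrix (Fin n₄) (Fin n₃) ℂ),
    sqEval f
        ((g₂ : Matrix (Fin n₂) (Fin n₂) ℂ) * v₁ * (g₁⁻¹ : Matrix (Fin n₁) (Fin n₁) ℂ))
        ((g₃ : Matrix (Fin n₃) (Fin n₃) ℂ) * v₂ * (g₁⁻¹ : Matrix (Fin n₁) (Fin n₁) ℂ))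
        ((g₄ : Matrix (Fin n₄) (Fin n₄) ℂ) * v₃ * (g₂⁻¹ : Matrix (Fin n₂) (Fin n₂) ℂ))
        ((g₄ : Matrix (Fin n₄) (Fin n₄) ℂ) * v₄ * (g₃⁻¹ : Matrix (Fin n₃) (Fin n₃) ℂ))
      = (g₁ : Matrix (Fin n₁) (Fin n₁) ℂ).det ^ (-σ₁)
        * (g₂ : Matrix (Fin n₂) (Fin n₂) ℂ).det ^ (-σ₂)
        * (g₃ : Matrix (Fin n₃) (Fin n₃) ℂ).det ^ (-σ₃)
        * (g₄ : Matrix (Fin n₄) (Fin n₄) ℂ).det ^ (-σ₄)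
        * sqEval f v₁ v₂ v₃ v₄

-- PART A: the Schofield-type matrix and its transformation law
namespace SqAux

open Matrix Kronecker

variable {R : Type*} [CommRing R]

/-- inclusion `e_j ↦ e_j` as a `(p+1) × p` matrix -/
def incl (p : ℕ) : Matrix (Fin (p+1)) (Fin p) R :=
  Matrix.of fun i j => if i = Fin.castSucc j then 1 else 0

/-- shift `e_j ↦ e_{j+1}` as a `(p+1) × p` matrix -/
def shf (p : ℕ) : Matrix (Fin (p+1)) (Fin p) R :=
  Matrix.of fun i j => if i = Fin.succ j then 1 else 0

abbrev ιL (p : ℕ) :=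
  ((Fin p × Fin (p+1)) ⊕ (Fin p × Fin (p+1))) ⊕ ((Fin p × Fin (p+1)) ⊕ (Fin (p+1) × Fin (p+2)))

abbrev κL (p : ℕ) :=
  ((Fin p × Fin (p+1)) ⊕ (Fin p × Fin (p+1))) ⊕ ((Fin (p+1) × Fin (p+1)) ⊕ (Fin (p+1) × Fin (p+1)))

/-- The block matrix whose determinant is the basic semi-invariant of weight
`(p, 1, 1, -(p+1))`. -/
def schMat (p : ℕ) (v₁ v₂ : Matrix (Fin (p+1)) (Fin (p+1)) R)
    (v₃ v₄ : Matrix (Fin (p+2)) (Fin (p+1)) R) : Matrix (κL p) (ιL p) R :=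
  fromBlocks
    (fromBlocks 1 (-(1 ⊗ₖ v₁ᵀ)) 1 0)
    (fromBlocks 0 0 (-(1 ⊗ₖ v₂ᵀ)) 0)
    (fromBlocks 0 (incl p ⊗ₖ 1) 0 0)
    (fromBlocks 0 (-(1 ⊗ₖ v₃ᵀ)) (shf p ⊗ₖ 1) (-(1 ⊗ₖ v₄ᵀ)))

/-- row transformation block-diagonal matrix -/
def pMat (p : ℕ) (b₁ b₂ b₃ : Matrix (Fin (p+1)) (Fin (p+1)) R) : Matrix (κL p) (κL p) R :=
  fromBlocks
    (fromBlocks (1 ⊗ₖ b₁ᵀ) 0 0 (1 ⊗ₖ b₁ᵀ)) 0 0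
    (fromBlocks (1 ⊗ₖ b₂ᵀ) 0 0 (1 ⊗ₖ b₃ᵀ))

/-- column transformation block-diagonal matrix -/
def qMat (p : ℕ) (a₁ a₂ a₃ : Matrix (Fin (p+1)) (Fin (p+1)) R)
    (a₄ : Matrix (Fin (p+2)) (Fin (p+2)) R) : Matrix (ιL p) (ιL p) R :=
  fromBlocks
    (fromBlocks (1 ⊗ₖ a₁ᵀ) 0 0 (1 ⊗ₖ a₂ᵀ)) 0 0
    (fromBlocks (1 ⊗ₖ a₃ᵀ) 0 0 (1 ⊗ₖ a₄ᵀ))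

lemma kron_one_mul_one {m k l o : Type*} [Fintype m] [DecidableEq m] [Fintype l]
    (X : Matrix k l R) (Y : Matrix l o R) :
    ((1 : Matrix m m R) ⊗ₖ X) * ((1 : Matrix m m R) ⊗ₖ Y) = 1 ⊗ₖ (X * Y) := by
  rw [← Matrix.mul_kronecker_mul, Matrix.one_mul]

lemma kron_mix_left {m m' k l : Type*} [Fintype m] [DecidableEq m] [Fintype k] [DecidableEq k]
    (C : Matrix m' m R) (X : Matrix k l R) :
    (C ⊗ₖ (1 : Matrix k k R)) * ((1 : Matrix m m R) ⊗ₖ X) = C ⊗ₖ X := by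
  rw [← Matrix.mul_kronecker_mul, Matrix.mul_one, Matrix.one_mul]

lemma kron_mul_kron_one {m m' k l o : Type*} [Fintype m] [DecidableEq m] [Fintype l]
    (C : Matrix m' m R) (X : Matrix k l R) (Y : Matrix l o R) :
    (C ⊗ₖ X) * ((1 : Matrix m m R) ⊗ₖ Y) = C ⊗ₖ (X * Y) := by
  rw [← Matrix.mul_kronecker_mul, Matrix.mul_one]

lemma kron_mix_right {m m' k l : Type*} [Fintype m'] [DecidableEq m'] [Fintype k] [DecidableEq k]
    (C : Matrix m' m R) (X : Matrix l k R) :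
    ((1 : Matrix m' m' R) ⊗ₖ X) * (C ⊗ₖ (1 : Matrix k k R)) = C ⊗ₖ X := by
  rw [← Matrix.mul_kronecker_mul, Matrix.mul_one, Matrix.one_mul]

theorem schMat_transform (p : ℕ) (v₁ v₂ : Matrix (Fin (p+1)) (Fin (p+1)) R)
    (v₃ v₄ : Matrix (Fin (p+2)) (Fin (p+1)) R)
    (a₁ a₂ a₃ b₁ b₂ b₃ : Matrix (Fin (p+1)) (Fin (p+1)) R)
    (a₄ : Matrix (Fin (p+2)) (Fin (p+2)) R)
    (h₁ : a₁ * b₁ = 1) (h₂ : a₂ * b₂ = 1) (h₃ : a₃ * b₃ = 1) :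
    schMat p (a₂ * v₁ * b₁) (a₃ * v₂ * b₁) (a₄ * v₃ * b₂) (a₄ * v₄ * b₃)
      = pMat p b₁ b₂ b₃ * schMat p v₁ v₂ v₃ v₄ * qMat p a₁ a₂ a₃ a₄ := by
  have key : ∀ {m k : ℕ} (b a : Matrix (Fin k) (Fin k) R) (w : Matrix (Fin k) (Fin k) R)
      (hm : True), ((1 : Matrix (Fin m) (Fin m) R) ⊗ₖ bᵀ) * (1 ⊗ₖ wᵀ) * (1 ⊗ₖ aᵀ)
        = 1 ⊗ₖ (a * w * b)ᵀ := by
    intro m k b a w _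
    rw [← Matrix.mul_kronecker_mul, ← Matrix.mul_kronecker_mul, Matrix.one_mul, Matrix.one_mul,
      Matrix.transpose_mul, Matrix.transpose_mul, Matrix.mul_assoc]
  have h₁t : b₁ᵀ * a₁ᵀ = 1 := by rw [← Matrix.transpose_mul, h₁, Matrix.transpose_one]
  have h₂t : b₂ᵀ * a₂ᵀ = 1 := by rw [← Matrix.transpose_mul, h₂, Matrix.transpose_one]
  have h₃t : b₃ᵀ * a₃ᵀ = 1 := by rw [← Matrix.transpose_mul, h₃, Matrix.transpose_one]
  unfold schMat pMat qMat
  simp only [Matrix.fromBlocks_multiply, Matrix.mul_zero, Matrix.zero_mul, add_zero, zero_add,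
    Matrix.mul_one, Matrix.one_mul, Matrix.neg_mul, Matrix.mul_neg, kron_one_mul_one,
    kron_mix_left, kron_mix_right, kron_mul_kron_one, neg_zero, Matrix.transpose_mul, Matrix.mul_assoc, h₁t, h₂t, h₃t,
    Matrix.one_kronecker_one, neg_neg, Matrix.kronecker_zero, Matrix.zero_kronecker]

end SqAux
-- PART B: determinants
namespace SqAux
open Matrix Kronecker
variable {R : Type*} [CommRing R]

lemma det_kron_one_left {m k : Type*} [Fintype m] [DecidableEq m] [Fintype k] [DecidableEq k]
    (B : Matrix k k R) :
    ((1 : Matrix m m R) ⊗ₖ Bᵀ).det = B.det ^ (Fintype.card m) := by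
  rw [Matrix.det_kronecker, Matrix.det_one, Matrix.det_transpose, one_pow, one_mul]

lemma det_pMat (p : ℕ) (b₁ b₂ b₃ : Matrix (Fin (p+1)) (Fin (p+1)) R) :
    (pMat p b₁ b₂ b₃).det = b₁.det ^ p * b₁.det ^ p * b₂.det ^ (p+1) * b₃.det ^ (p+1) := by
  unfold pMat
  rw [Matrix.det_fromBlocks_zero₂₁, Matrix.det_fromBlocks_zero₂₁, Matrix.det_fromBlocks_zero₂₁]
  simp only [det_kron_one_left, Fintype.card_fin]
  ring

lemma det_qMat (p : ℕ) (a₁ a₂ a₃ : Matrix (Fin (p+1)) (Fin (p+1)) R)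
    (a₄ : Matrix (Fin (p+2)) (Fin (p+2)) R) :
    (qMat p a₁ a₂ a₃ a₄).det = a₁.det ^ p * a₂.det ^ p * a₃.det ^ p * a₄.det ^ (p+1) := by
  unfold qMat
  rw [Matrix.det_fromBlocks_zero₂₁, Matrix.det_fromBlocks_zero₂₁, Matrix.det_fromBlocks_zero₂₁]
  simp only [det_kron_one_left, Fintype.card_fin]
  ring

noncomputable def schEquiv (p : ℕ) : ιL p ≃ κL p :=
  Fintype.equivOfCardEq (by
    simp only [Fintype.card_sum, Fintype.card_prod, Fintype.card_fin]
    ring)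

/-- the square version of `schMat` -/
noncomputable def schSq (p : ℕ) (v₁ v₂ : Matrix (Fin (p+1)) (Fin (p+1)) R)
    (v₃ v₄ : Matrix (Fin (p+2)) (Fin (p+1)) R) : Matrix (ιL p) (ιL p) R :=
  (schMat p v₁ v₂ v₃ v₄).submatrix (schEquiv p) id

theorem det_schSq_transform (p : ℕ) (v₁ v₂ : Matrix (Fin (p+1)) (Fin (p+1)) R)
    (v₃ v₄ : Matrix (Fin (p+2)) (Fin (p+1)) R)
    (a₁ a₂ a₃ b₁ b₂ b₃ : Matrix (Fin (p+1)) (Fin (p+1)) R)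
    (a₄ : Matrix (Fin (p+2)) (Fin (p+2)) R)
    (h₁ : a₁ * b₁ = 1) (h₂ : a₂ * b₂ = 1) (h₃ : a₃ * b₃ = 1) :
    (schSq p (a₂ * v₁ * b₁) (a₃ * v₂ * b₁) (a₄ * v₃ * b₂) (a₄ * v₄ * b₃)).det
      = (b₁.det ^ p * b₁.det ^ p * b₂.det ^ (p+1) * b₃.det ^ (p+1))
        * (a₁.det ^ p * a₂.det ^ p * a₃.det ^ p * a₄.det ^ (p+1))
        * (schSq p v₁ v₂ v₃ v₄).det := by
  unfold schSq
  rw [schMat_transform p v₁ v₂ v₃ v₄ a₁ a₂ a₃ b₁ b₂ b₃ a₄ h₁ h₂ h₃]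
  have step2 : (schMat p v₁ v₂ v₃ v₄ * qMat p a₁ a₂ a₃ a₄).submatrix (schEquiv p) id
      = (schMat p v₁ v₂ v₃ v₄).submatrix (schEquiv p) id * qMat p a₁ a₂ a₃ a₄ := by
    ext i j
    simp [Matrix.mul_apply, Matrix.submatrix_apply]
  rw [Matrix.mul_assoc, ← Matrix.submatrix_mul_equiv (pMat p b₁ b₂ b₃)
      (schMat p v₁ v₂ v₃ v₄ * qMat p a₁ a₂ a₃ a₄) (⇑(schEquiv p)) (schEquiv p) id]
  rw [step2, ← Matrix.mul_assoc, Matrix.det_mul, Matrix.det_mul,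
    Matrix.det_submatrix_equiv_self, det_pMat, det_qMat]
  ring

end SqAux
-- PART C: nonvanishing at the special point
namespace SqAux
open Matrix Kronecker
set_option maxHeartbeats 1000000

lemma schMat_ker (p : ℕ) (x : ιL p → ℂ)
    (hx : ∀ k, (schMat p 1 1 (incl (p+1)) (shf (p+1))).mulVec x k = 0) : x = 0 := by
  set φ₁ : Fin p → Fin (p+1) → ℂ := fun a i => x (.inl (.inl (a,i))) with hφ₁
  set φ₂ : Fin p → Fin (p+1) → ℂ := fun a i => x (.inl (.inr (a,i))) with hφ₂
  set φ₃ : Fin p → Fin (p+1) → ℂ := fun a i => x (.inr (.inl (a,i))) with hφ₃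
  set ψ : Fin (p+1) → Fin (p+2) → ℂ := fun c k => x (.inr (.inr (c,k))) with hψ
  have E1 : ∀ a i, φ₁ a i - φ₂ a i = 0 := by
    intro a i
    have := hx (.inl (.inl (a,i)))
    simpa [Matrix.mulVec, dotProduct, schMat, Fintype.sum_sum_type,
      Fintype.sum_prod_type, Matrix.one_apply, kroneckerMap_apply, Finset.mul_sum,
      Finset.sum_ite_eq, Finset.sum_ite_eq', sub_eq_add_neg] using this
  have E2 : ∀ a i, φ₁ a i - φ₃ a i = 0 := by
    intro a i
    have := hx (.inl (.inr (a,i)))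
    simpa [Matrix.mulVec, dotProduct, schMat, Fintype.sum_sum_type,
      Fintype.sum_prod_type, Matrix.one_apply, kroneckerMap_apply, Finset.mul_sum,
      Finset.sum_ite_eq, Finset.sum_ite_eq', sub_eq_add_neg] using this
  have E3a : ∀ (b : Fin p) (i : Fin (p+1)),
      φ₂ b i - ψ (Fin.castSucc b) (Fin.castSucc i) = 0 := by
    intro b i
    have := hx (.inr (.inl (Fin.castSucc b, i)))
    simpa [Matrix.mulVec, dotProduct, schMat, incl, Fintype.sum_sum_type,
      Fintype.sum_prod_type, Matrix.one_apply, kroneckerMap_apply, Finset.mul_sum,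
      Fin.castSucc_inj, Finset.sum_ite_eq, Finset.sum_ite_eq', sub_eq_add_neg] using this
  have E3b : ∀ (i : Fin (p+1)), ψ (Fin.last p) (Fin.castSucc i) = 0 := by
    intro i
    have hne : ∀ b' : Fin p, (Fin.last p = Fin.castSucc b') = False :=
      fun b' => eq_false (Fin.castSucc_lt_last b').ne'
    have := hx (.inr (.inl (Fin.last p, i)))
    simpa [Matrix.mulVec, dotProduct, schMat, incl, Fintype.sum_sum_type,
      Fintype.sum_prod_type, Matrix.one_apply, kroneckerMap_apply, Finset.mul_sum,
      hne, Finset.sum_ite_eq, Finset.sum_ite_eq', neg_eq_zero] using this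
  have E4a : ∀ (b : Fin p) (i : Fin (p+1)),
      φ₃ b i - ψ (Fin.succ b) (Fin.succ i) = 0 := by
    intro b i
    have := hx (.inr (.inr (Fin.succ b, i)))
    simpa [Matrix.mulVec, dotProduct, schMat, shf, Fintype.sum_sum_type,
      Fintype.sum_prod_type, Matrix.one_apply, kroneckerMap_apply, Finset.mul_sum,
      Fin.succ_inj, Finset.sum_ite_eq, Finset.sum_ite_eq', sub_eq_add_neg] using this
  have E4b : ∀ (i : Fin (p+1)), ψ 0 (Fin.succ i) = 0 := by
    intro i
    have hne : ∀ b' : Fin p, ((0 : Fin (p+1)) = Fin.succ b') = False :=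
      fun b' => eq_false (fun h => (Fin.succ_ne_zero b') h.symm)
    have := hx (.inr (.inr (0, i)))
    simpa [Matrix.mulVec, dotProduct, schMat, shf, Fintype.sum_sum_type,
      Fintype.sum_prod_type, Matrix.one_apply, kroneckerMap_apply, Finset.mul_sum,
      hne, Finset.sum_ite_eq, Finset.sum_ite_eq', neg_eq_zero] using this
  -- diagonal propagation
  have diag : ∀ (b : Fin p) (i : Fin (p+1)),
      ψ (Fin.castSucc b) (Fin.castSucc i) = ψ (Fin.succ b) (Fin.succ i) := by
    intro b i
    have h1 := E3a b i
    have h2 := E4a b i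
    have h3 := E1 b i
    have h4 := E2 b i
    linear_combination -h1 + h2 - h3 + h4
  -- L1 : below-diagonal vanishing
  have L1 : ∀ (d : ℕ) (c : Fin (p+1)) (k : Fin (p+2)),
      (c : ℕ) + d = p → (k : ℕ) ≤ (c : ℕ) → ψ c k = 0 := by
    intro d
    induction d with
    | zero =>
      intro c k hc hk
      have hc' : c = Fin.last p := by
        apply Fin.ext; simpa using hc
      have hk' : (k : ℕ) < p + 1 := by omega
      have : k = Fin.castSucc ⟨(k : ℕ), hk'⟩ := by apply Fin.ext; simp
      rw [hc', this]
      exact E3b _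
    | succ d ih =>
      intro c k hc hk
      have hcp : (c : ℕ) < p := by omega
      have hkp : (k : ℕ) < p + 1 := by omega
      have hc' : c = Fin.castSucc ⟨(c : ℕ), hcp⟩ := by apply Fin.ext; simp
      have hk' : k = Fin.castSucc ⟨(k : ℕ), by omega⟩ := by apply Fin.ext; simp
      rw [hc', hk', diag]
      apply ih
      · simp; omega
      · simp; omega
  -- L2 : above-diagonal vanishing
  have L2 : ∀ (m : ℕ) (c : Fin (p+1)) (k : Fin (p+2)),
      (c : ℕ) = m → (c : ℕ) < (k : ℕ) → ψ c k = 0 := by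
    intro m
    induction m with
    | zero =>
      intro c k hc hk
      have hc' : c = 0 := by apply Fin.ext; simpa using hc
      have hk1 : 1 ≤ (k : ℕ) := by omega
      have hkk : (k : ℕ) - 1 < p + 1 := by omega
      have : k = Fin.succ ⟨(k : ℕ) - 1, hkk⟩ := by apply Fin.ext; simp [Fin.val_succ]; omega
      rw [hc', this]
      exact E4b _
    | succ m ih =>
      intro c k hc hk
      have hbp : m < p := by omega
      have hkk : (k : ℕ) - 1 < p + 1 := by omega
      have hc' : c = Fin.succ ⟨m, hbp⟩ := by apply Fin.ext; simp [Fin.val_succ]; omega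
      have hk' : k = Fin.succ ⟨(k : ℕ) - 1, hkk⟩ := by apply Fin.ext; simp [Fin.val_succ]; omega
      rw [hc', hk', ← diag]
      apply ih
      · simp
      · simp; omega
  have hψ0 : ∀ c k, ψ c k = 0 := by
    intro c k
    rcases le_or_gt (k : ℕ) (c : ℕ) with h | h
    · exact L1 (p - (c : ℕ)) c k (by omega) h
    · exact L2 (c : ℕ) c k rfl h
  have hφ₂0 : ∀ b i, φ₂ b i = 0 := by
    intro b i
    have h := E3a b i
    rw [hψ0] at h
    simpa using h
  have hφ₁0 : ∀ b i, φ₁ b i = 0 := by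
    intro b i
    have h := E1 b i
    rw [hφ₂0] at h
    simpa using h
  have hφ₃0 : ∀ b i, φ₃ b i = 0 := by
    intro b i
    have h := E2 b i
    rw [hφ₁0] at h
    simpa using h
  funext j
  rcases j with (⟨a,i⟩|⟨a,i⟩) | (⟨a,i⟩|⟨c,k⟩)
  · exact hφ₁0 a i
  · exact hφ₂0 a i
  · exact hφ₃0 a i
  · exact hψ0 c k

end SqAux

namespace SqAux
open Matrix Kronecker

lemma det_schSq_special (p : ℕ) :
    (schSq p 1 1 (incl (p+1)) (shf (p+1)) : Matrix _ _ ℂ).det ≠ 0 := by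
  intro h
  obtain ⟨x, hx0, hx⟩ := (Matrix.exists_mulVec_eq_zero_iff).2 h
  apply hx0
  apply schMat_ker p x
  intro k
  have := congrFun hx ((schEquiv p).symm k)
  simpa [schSq, Matrix.mulVec, dotProduct, Matrix.submatrix_apply] using this

end SqAux
-- PART D: polynomial level
namespace SqAux
open Matrix Kronecker MvPolynomial

abbrev SqR (p : ℕ) := MvPolynomial (SqVars (p+1) (p+1) (p+1) (p+2)) ℂ

noncomputable def X₁ (p : ℕ) : Matrix (Fin (p+1)) (Fin (p+1)) (SqR p) :=
  Matrix.of fun i j => MvPolynomial.X (.inl (i,j))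
noncomputable def X₂ (p : ℕ) : Matrix (Fin (p+1)) (Fin (p+1)) (SqR p) :=
  Matrix.of fun i j => MvPolynomial.X (.inr (.inl (i,j)))
noncomputable def X₃ (p : ℕ) : Matrix (Fin (p+2)) (Fin (p+1)) (SqR p) :=
  Matrix.of fun i j => MvPolynomial.X (.inr (.inr (.inl (i,j))))
noncomputable def X₄ (p : ℕ) : Matrix (Fin (p+2)) (Fin (p+1)) (SqR p) :=
  Matrix.of fun i j => MvPolynomial.X (.inr (.inr (.inr (i,j))))

variable {p : ℕ}

/-- the evaluation ring hom -/
noncomputable def sqHom (v₁ v₂ : Matrix (Fin (p+1)) (Fin (p+1)) ℂ)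
    (v₃ v₄ : Matrix (Fin (p+2)) (Fin (p+1)) ℂ) : SqR p →+* ℂ :=
  (MvPolynomial.eval
    (Sum.elim (fun q => v₁ q.1 q.2) <| Sum.elim (fun q => v₂ q.1 q.2) <|
      Sum.elim (fun q => v₃ q.1 q.2) (fun q => v₄ q.1 q.2)))

lemma sqEval_eq_sqHom (f : SqR p) (v₁ v₂ : Matrix (Fin (p+1)) (Fin (p+1)) ℂ)
    (v₃ v₄ : Matrix (Fin (p+2)) (Fin (p+1)) ℂ) :
    sqEval f v₁ v₂ v₃ v₄ = sqHom v₁ v₂ v₃ v₄ f := rfl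

lemma map_schMat {R S : Type*} [CommRing R] [CommRing S] (φ : R →+* S)
    (v₁ v₂ : Matrix (Fin (p+1)) (Fin (p+1)) R) (v₃ v₄ : Matrix (Fin (p+2)) (Fin (p+1)) R) :
    (schMat p v₁ v₂ v₃ v₄).map φ
      = schMat p (v₁.map φ) (v₂.map φ) (v₃.map φ) (v₄.map φ) := by
  ext k j
  rcases k with (⟨a,i⟩|⟨a,i⟩) | (⟨c,i⟩|⟨c,i⟩) <;>
    rcases j with (⟨b,l⟩|⟨b,l⟩) | (⟨b,l⟩|⟨d,l⟩) <;>
      simp [schMat, incl, shf, Matrix.one_apply, apply_ite φ, _root_.map_one, _root_.map_zero, _root_.map_neg,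
        _root_.map_mul]

lemma sqHom_det_schSq (v₁ v₂ : Matrix (Fin (p+1)) (Fin (p+1)) ℂ)
    (v₃ v₄ : Matrix (Fin (p+2)) (Fin (p+1)) ℂ) :
    sqHom v₁ v₂ v₃ v₄ (schSq p (X₁ p) (X₂ p) (X₃ p) (X₄ p)).det
      = (schSq p v₁ v₂ v₃ v₄).det := by
  rw [RingHom.map_det]
  congr 1
  show ((schSq p (X₁ p) (X₂ p) (X₃ p) (X₄ p)).map (sqHom v₁ v₂ v₃ v₄)) = _
  unfold schSq
  have : ((schMat p (X₁ p) (X₂ p) (X₃ p) (X₄ p)).submatrix (schEquiv p) id).map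
      (sqHom v₁ v₂ v₃ v₄)
      = ((schMat p (X₁ p) (X₂ p) (X₃ p) (X₄ p)).map (sqHom v₁ v₂ v₃ v₄)).submatrix
        (schEquiv p) id := rfl
  rw [this, map_schMat]
  have e1 : (X₁ p).map ⇑(sqHom v₁ v₂ v₃ v₄) = v₁ := by ext i j; simp [X₁, sqHom]
  have e2 : (X₂ p).map ⇑(sqHom v₁ v₂ v₃ v₄) = v₂ := by ext i j; simp [X₂, sqHom]
  have e3 : (X₃ p).map ⇑(sqHom v₁ v₂ v₃ v₄) = v₃ := by ext i j; simp [X₃, sqHom]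
  have e4 : (X₄ p).map ⇑(sqHom v₁ v₂ v₃ v₄) = v₄ := by ext i j; simp [X₄, sqHom]
  rw [e1, e2, e3, e4]

end SqAux
-- PART E: semi-invariance lemmas and sufficiency
namespace SqAux
open Matrix Kronecker MvPolynomial

lemma det_unit_ne_zero {m : ℕ} (g : (Matrix (Fin m) (Fin m) ℂ)ˣ) :
    ((g : Matrix (Fin m) (Fin m) ℂ)).det ≠ 0 :=
  (((Matrix.isUnit_iff_isUnit_det _).1 g.isUnit)).ne_zero

lemma det_unit_inv {m : ℕ} (g : (Matrix (Fin m) (Fin m) ℂ)ˣ) :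
    ((g⁻¹ : (Matrix (Fin m) (Fin m) ℂ)ˣ) : Matrix (Fin m) (Fin m) ℂ).det
      = (((g : Matrix (Fin m) (Fin m) ℂ)).det)⁻¹ := by
  apply eq_inv_of_mul_eq_one_left
  rw [← Matrix.det_mul]
  norm_cast
  rw [inv_mul_cancel]
  exact Matrix.det_one

lemma isSq_mul {n₁ n₂ n₃ n₄ : ℕ} {σ₁ σ₂ σ₃ σ₄ τ₁ τ₂ τ₃ τ₄ : ℤ}
    {f g : MvPolynomial (SqVars n₁ n₂ n₃ n₄) ℂ}
    (hf : IsSqSemiInvariant σ₁ σ₂ σ₃ σ₄ f) (hg : IsSqSemiInvariant τ₁ τ₂ τ₃ τ₄ g) :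
    IsSqSemiInvariant (σ₁+τ₁) (σ₂+τ₂) (σ₃+τ₃) (σ₄+τ₄) (f * g) := by
  intro g₁ g₂ g₃ g₄ v₁ v₂ v₃ v₄
  have hmul : ∀ (w₁ : Matrix (Fin n₂) (Fin n₁) ℂ) (w₂ : Matrix (Fin n₃) (Fin n₁) ℂ)
      (w₃ : Matrix (Fin n₄) (Fin n₂) ℂ) (w₄ : Matrix (Fin n₄) (Fin n₃) ℂ),
      sqEval (f * g) w₁ w₂ w₃ w₄ = sqEval f w₁ w₂ w₃ w₄ * sqEval g w₁ w₂ w₃ w₄ := by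
    intro w₁ w₂ w₃ w₄
    simp [sqEval]
  rw [hmul, hmul, hf g₁ g₂ g₃ g₄ v₁ v₂ v₃ v₄, hg g₁ g₂ g₃ g₄ v₁ v₂ v₃ v₄,
    neg_add, neg_add, neg_add, neg_add,
    zpow_add₀ (det_unit_ne_zero g₁), zpow_add₀ (det_unit_ne_zero g₂),
    zpow_add₀ (det_unit_ne_zero g₃), zpow_add₀ (det_unit_ne_zero g₄)]
  ring

lemma isSq_one {n₁ n₂ n₃ n₄ : ℕ} :
    IsSqSemiInvariant (n₁ := n₁) (n₂ := n₂) (n₃ := n₃) (n₄ := n₄) 0 0 0 0 1 := by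
  intro g₁ g₂ g₃ g₄ v₁ v₂ v₃ v₄
  simp [sqEval]

lemma isSq_pow {n₁ n₂ n₃ n₄ : ℕ} {σ₁ σ₂ σ₃ σ₄ : ℤ}
    {f : MvPolynomial (SqVars n₁ n₂ n₃ n₄) ℂ}
    (hf : IsSqSemiInvariant σ₁ σ₂ σ₃ σ₄ f) (k : ℕ) :
    IsSqSemiInvariant ((k:ℤ)*σ₁) ((k:ℤ)*σ₂) ((k:ℤ)*σ₃) ((k:ℤ)*σ₄) (f ^ k) := by
  induction k with
  | zero => simpa using isSq_one
  | succ k ih =>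
    have := isSq_mul ih hf
    have harr : ∀ σ : ℤ, (k:ℤ)*σ + σ = ((k+1 : ℕ):ℤ)*σ := by intro σ; push_cast; ring
    rw [harr σ₁, harr σ₂, harr σ₃, harr σ₄] at this
    simpa [pow_succ] using this

end SqAux
-- PART F: the three basic semi-invariants
namespace SqAux
open Matrix Kronecker MvPolynomial

variable {p : ℕ}

lemma map_X₁ (v₁ v₂ : Matrix (Fin (p+1)) (Fin (p+1)) ℂ)
    (v₃ v₄ : Matrix (Fin (p+2)) (Fin (p+1)) ℂ) :
    (X₁ p).map ⇑(sqHom v₁ v₂ v₃ v₄) = v₁ := by ext i j; simp [X₁, sqHom]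

lemma map_X₂ (v₁ v₂ : Matrix (Fin (p+1)) (Fin (p+1)) ℂ)
    (v₃ v₄ : Matrix (Fin (p+2)) (Fin (p+1)) ℂ) :
    (X₂ p).map ⇑(sqHom v₁ v₂ v₃ v₄) = v₂ := by ext i j; simp [X₂, sqHom]

lemma sqHom_det_X₁ (v₁ v₂ : Matrix (Fin (p+1)) (Fin (p+1)) ℂ)
    (v₃ v₄ : Matrix (Fin (p+2)) (Fin (p+1)) ℂ) :
    sqHom v₁ v₂ v₃ v₄ (X₁ p).det = v₁.det := by
  rw [RingHom.map_det]
  congr 1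
  exact map_X₁ v₁ v₂ v₃ v₄

lemma sqHom_det_X₂ (v₁ v₂ : Matrix (Fin (p+1)) (Fin (p+1)) ℂ)
    (v₃ v₄ : Matrix (Fin (p+2)) (Fin (p+1)) ℂ) :
    sqHom v₁ v₂ v₃ v₄ (X₂ p).det = v₂.det := by
  rw [RingHom.map_det]
  congr 1
  exact map_X₂ v₁ v₂ v₃ v₄

lemma isSq_detX₁ : IsSqSemiInvariant 1 (-1) 0 0 ((X₁ p).det) := by
  intro g₁ g₂ g₃ g₄ v₁ v₂ v₃ v₄
  simp only [← Matrix.coe_units_inv]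
  rw [sqEval_eq_sqHom, sqHom_det_X₁, sqEval_eq_sqHom, sqHom_det_X₁,
    Matrix.det_mul, Matrix.det_mul, det_unit_inv]
  simp only [neg_neg, neg_zero, zpow_zero, zpow_one, _root_.zpow_neg_one]
  ring

lemma isSq_detX₂ : IsSqSemiInvariant 1 0 (-1) 0 ((X₂ p).det) := by
  intro g₁ g₂ g₃ g₄ v₁ v₂ v₃ v₄
  simp only [← Matrix.coe_units_inv]
  rw [sqEval_eq_sqHom, sqHom_det_X₂, sqEval_eq_sqHom, sqHom_det_X₂,
    Matrix.det_mul, Matrix.det_mul, det_unit_inv]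
  simp only [neg_neg, neg_zero, zpow_zero, zpow_one, _root_.zpow_neg_one]
  ring

lemma isSq_F : IsSqSemiInvariant (p:ℤ) 1 1 (-((p:ℤ)+1))
    ((schSq p (X₁ p) (X₂ p) (X₃ p) (X₄ p)).det) := by
  intro g₁ g₂ g₃ g₄ v₁ v₂ v₃ v₄
  simp only [← Matrix.coe_units_inv]
  rw [sqEval_eq_sqHom, sqHom_det_schSq, sqEval_eq_sqHom, sqHom_det_schSq]
  have key := det_schSq_transform p v₁ v₂ v₃ v₄
    (↑g₁) (↑g₂) (↑g₃) (↑(g₁⁻¹)) (↑(g₂⁻¹)) (↑(g₃⁻¹)) (↑g₄)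
    (by norm_cast; rw [mul_inv_cancel]; rfl) (by norm_cast; rw [mul_inv_cancel]; rfl)
    (by norm_cast; rw [mul_inv_cancel]; rfl)
  rw [key, det_unit_inv, det_unit_inv, det_unit_inv]
  have hc : ((p:ℤ)+1) = ((p+1 : ℕ):ℤ) := by push_cast; ring
  rw [neg_neg, hc, zpow_natCast]
  simp only [_root_.zpow_neg, zpow_natCast, zpow_one, inv_pow]
  have h1 := det_unit_ne_zero g₁
  have h2 := det_unit_ne_zero g₂
  have h3 := det_unit_ne_zero g₃
  have hA : ((g₁ : Matrix (Fin (p+1)) (Fin (p+1)) ℂ)).det ^ p ≠ 0 := pow_ne_zero _ h1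
  have hB : ((g₂ : Matrix (Fin (p+1)) (Fin (p+1)) ℂ)).det ^ (p+1) ≠ 0 := pow_ne_zero _ h2
  have hC : ((g₃ : Matrix (Fin (p+1)) (Fin (p+1)) ℂ)).det ^ (p+1) ≠ 0 := pow_ne_zero _ h3
  field_simp
  ring

end SqAux
-- PART G: sufficiency
namespace SqAux
open Matrix Kronecker MvPolynomial

variable {p : ℕ}

lemma F_ne_zero : (schSq p (X₁ p) (X₂ p) (X₃ p) (X₄ p)).det ≠ 0 := by
  intro h
  have h2 := sqHom_det_schSq (p := p) 1 1 (incl (p+1)) (shf (p+1))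
  rw [h] at h2
  simp only [map_zero] at h2
  exact det_schSq_special p h2.symm

lemma detX₁_ne_zero : (X₁ p).det ≠ 0 := by
  intro h
  have h2 := sqHom_det_X₁ (p := p) 1 1 0 0
  rw [h] at h2
  simp at h2

lemma detX₂_ne_zero : (X₂ p).det ≠ 0 := by
  intro h
  have h2 := sqHom_det_X₂ (p := p) 1 1 0 0
  rw [h] at h2
  simp at h2

theorem sq_sufficiency (p : ℕ) (σ₁ σ₂ σ₃ σ₄ : ℤ) (h1 : 0 ≤ σ₁ + σ₂ + σ₄)
    (h2 : 0 ≤ σ₁ + σ₃ + σ₄) (h3 : σ₄ ≤ 0)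
    (h4 : ((p:ℤ)+1)*σ₁ + ((p:ℤ)+1)*σ₂ + ((p:ℤ)+1)*σ₃ + ((p:ℤ)+2)*σ₄ = 0) :
    ∃ f : MvPolynomial (SqVars (p+1) (p+1) (p+1) (p+2)) ℂ,
      f ≠ 0 ∧ IsSqSemiInvariant σ₁ σ₂ σ₃ σ₄ f := by
  set t : ℤ := σ₁ + σ₂ + σ₃ + σ₄ with hts
  have htr : ((p:ℤ)+1) * t + σ₄ = 0 := by rw [hts]; linear_combination h4
  have ht0 : 0 ≤ t := by nlinarith
  have hα : 0 ≤ t - σ₂ := by omega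
  have hβ : 0 ≤ t - σ₃ := by omega
  refine ⟨(schSq p (X₁ p) (X₂ p) (X₃ p) (X₄ p)).det ^ t.toNat
    * ((X₁ p).det) ^ (t - σ₂).toNat * ((X₂ p).det) ^ (t - σ₃).toNat, ?_, ?_⟩
  · exact mul_ne_zero (mul_ne_zero (pow_ne_zero _ F_ne_zero) (pow_ne_zero _ detX₁_ne_zero))
      (pow_ne_zero _ detX₂_ne_zero)
  · have hh := isSq_mul (isSq_mul (isSq_pow (isSq_F (p := p)) t.toNat)
      (isSq_pow (isSq_detX₁ (p := p)) (t - σ₂).toNat))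
      (isSq_pow (isSq_detX₂ (p := p)) (t - σ₃).toNat)
    rw [Int.toNat_of_nonneg ht0, Int.toNat_of_nonneg hα, Int.toNat_of_nonneg hβ] at hh
    have e1 : σ₁ = t * (p:ℤ) + (t - σ₂) * 1 + (t - σ₃) * 1 := by
      rw [hts]; linear_combination -h4
    have e2 : σ₂ = t * 1 + (t - σ₂) * -1 + (t - σ₃) * 0 := by ring
    have e3 : σ₃ = t * 1 + (t - σ₂) * 0 + (t - σ₃) * -1 := by ring
    have e4 : σ₄ = t * -((p:ℤ) + 1) + (t - σ₂) * 0 + (t - σ₃) * 0 := by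
      rw [hts]; linear_combination h4
    rw [← e1, ← e2, ← e3, ← e4] at hh
    exact hh
  
end SqAux
-- PART H: necessity toolkit
namespace SqAux
open Matrix Kronecker MvPolynomial

/-- If a polynomial agrees with `s ^ m * c` (`c ≠ 0`) away from `0`, then `m ≥ 0`. -/
lemma polyA {m : ℤ} {c : ℂ} (hc : c ≠ 0) (P : Polynomial ℂ)
    (h : ∀ s : ℂ, s ≠ 0 → P.eval s = s ^ m * c) : 0 ≤ m := by
  by_contra hm
  push_neg at hm
  set k := (-m).toNat with hk
  have hk0 : 0 < k := by omega
  have hzero : (Polynomial.X ^ k * P - Polynomial.C c) = 0 := by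
    apply Polynomial.eq_zero_of_infinite_isRoot
    apply Set.Infinite.mono _ ((Set.finite_singleton (0:ℂ)).infinite_compl)
    intro s hs
    have hs0 : s ≠ 0 := hs
    have hsk : (s : ℂ) ^ (k : ℕ) = s ^ (-m) := by
      rw [← zpow_natCast s k, hk, Int.toNat_of_nonneg (by omega)]
    simp only [Set.mem_setOf_eq, Polynomial.IsRoot, Polynomial.eval_sub, Polynomial.eval_mul,
      Polynomial.eval_pow, Polynomial.eval_X, Polynomial.eval_C, h s hs0, hsk]
    rw [← mul_assoc, ← zpow_add₀ hs0, neg_add_cancel, zpow_zero, one_mul, sub_self]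
  have h0 := congrArg (Polynomial.eval 0) hzero
  simp [zero_pow hk0.ne'] at h0
  exact hc h0

/-- Specialization of `polyA` through a polynomial family of points. -/
lemma eval_family {n₁ n₂ n₃ n₄ : ℕ} (B : SqVars n₁ n₂ n₃ n₄ → Polynomial ℂ)
    (f : MvPolynomial (SqVars n₁ n₂ n₃ n₄) ℂ) {m : ℤ} {c : ℂ} (hc : c ≠ 0)
    (h : ∀ s : ℂ, s ≠ 0 →
      MvPolynomial.eval (fun v => (B v).eval s) f = s ^ m * c) : 0 ≤ m := by
  apply polyA hc (MvPolynomial.eval₂ Polynomial.C B f)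
  intro s hs
  rw [← h s hs]
  have hcomp := MvPolynomial.eval₂_comp_left (Polynomial.evalRingHom s) Polynomial.C B f
  have hid : (Polynomial.evalRingHom s).comp (Polynomial.C : ℂ →+* Polynomial ℂ)
      = RingHom.id ℂ := by
    ext x
    simp
  rw [hid] at hcomp
  rw [show Polynomial.eval s (MvPolynomial.eval₂ Polynomial.C B f)
    = Polynomial.evalRingHom s (MvPolynomial.eval₂ Polynomial.C B f) from rfl, hcomp,
    MvPolynomial.eval₂_id]
  rfl

/-- invertible diagonal matrix as a unit -/
noncomputable def diagU {m : ℕ} (d : Fin m → ℂ) (hd : ∀ i, d i ≠ 0) : (Matrix (Fin m) (Fin m) ℂ)ˣ where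
  val := Matrix.diagonal d
  inv := Matrix.diagonal (fun i => (d i)⁻¹)
  val_inv := by
    rw [Matrix.diagonal_mul_diagonal]
    have h : (fun i => d i * (d i)⁻¹) = fun _ => (1:ℂ) := funext fun i => mul_inv_cancel₀ (hd i)
    rw [h]
    exact Matrix.diagonal_one
  inv_val := by
    rw [Matrix.diagonal_mul_diagonal]
    have h : (fun i => (d i)⁻¹ * d i) = fun _ => (1:ℂ) := funext fun i => inv_mul_cancel₀ (hd i)
    rw [h]
    exact Matrix.diagonal_one

@[simp] lemma diagU_coe {m : ℕ} (d : Fin m → ℂ) (hd : ∀ i, d i ≠ 0) :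
    ((diagU d hd : (Matrix (Fin m) (Fin m) ℂ)ˣ) : Matrix (Fin m) (Fin m) ℂ)
      = Matrix.diagonal d := rfl

@[simp] lemma diagU_inv_coe {m : ℕ} (d : Fin m → ℂ) (hd : ∀ i, d i ≠ 0) :
    (((diagU d hd)⁻¹ : (Matrix (Fin m) (Fin m) ℂ)ˣ) : Matrix (Fin m) (Fin m) ℂ)
      = Matrix.diagonal (fun i => (d i)⁻¹) := rfl

/-- completion of a nonzero covector to an invertible matrix having it as last row -/
lemma exists_unit_lastRow {m : ℕ} (u : Fin (m+1) → ℂ) (hu : u ≠ 0) :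
    ∃ g : (Matrix (Fin (m+1)) (Fin (m+1)) ℂ)ˣ,
      ∀ j, (g : Matrix (Fin (m+1)) (Fin (m+1)) ℂ) (Fin.last m) j = u j := by
  obtain ⟨i₀, hi₀'⟩ := Function.ne_iff.1 hu
  have hi₀ : u i₀ ≠ 0 := by simpa using hi₀'
  set e := Equiv.swap i₀ (Fin.last m) with he
  set A : Matrix (Fin (m+1)) (Fin (m+1)) ℂ :=
    (1 : Matrix (Fin (m+1)) (Fin (m+1)) ℂ).updateRow (Fin.last m) (u ∘ e) with hA
  have hdetA : A.det = u i₀ := by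
    have h1 : A = ((1 : Matrix (Fin (m+1)) (Fin (m+1)) ℂ).updateCol (Fin.last m) (u ∘ e))ᵀ := by
      rw [hA, ← Matrix.updateRow_transpose, Matrix.transpose_one]
    rw [h1, Matrix.det_transpose, ← Matrix.cramer_apply, Matrix.cramer_one]
    simp [he, Equiv.swap_apply_right]
  set M : Matrix (Fin (m+1)) (Fin (m+1)) ℂ := A.submatrix id e with hM
  have hdetM : M.det = ((Equiv.Perm.sign e : ℤ) : ℂ) * u i₀ := by
    rw [hM, Matrix.det_permute', hdetA]
  have hMdet_ne : IsUnit M.det := by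
    rw [hdetM, isUnit_iff_ne_zero]
    apply mul_ne_zero _ hi₀
    rcases Int.units_eq_one_or (Equiv.Perm.sign e) with h | h <;> simp [h]
  refine ⟨Matrix.nonsingInvUnit M hMdet_ne, ?_⟩
  intro j
  show M (Fin.last m) j = u j
  rw [hM]
  simp only [Matrix.submatrix_apply, id_eq, hA, Matrix.updateRow_self]
  simp [he, Equiv.swap_apply_self]

/-- completion such that `w ᵥ* g⁻¹` is supported at the last coordinate -/
lemma exists_unit_vecMul_inv {m : ℕ} (w : Fin (m+1) → ℂ) :
    ∃ g : (Matrix (Fin (m+1)) (Fin (m+1)) ℂ)ˣ,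
      ∀ j, j ≠ Fin.last m →
        (w ᵥ* ((g⁻¹ : (Matrix (Fin (m+1)) (Fin (m+1)) ℂ)ˣ) : Matrix (Fin (m+1)) (Fin (m+1)) ℂ)) j
          = 0 := by
  rcases eq_or_ne w 0 with rfl | hw
  · exact ⟨1, fun j _ => by simp⟩
  · obtain ⟨g, hg⟩ := exists_unit_lastRow w hw
    refine ⟨g, fun j hj => ?_⟩
    set gi : Matrix (Fin (m+1)) (Fin (m+1)) ℂ :=
      ((g⁻¹ : (Matrix (Fin (m+1)) (Fin (m+1)) ℂ)ˣ) : Matrix (Fin (m+1)) (Fin (m+1)) ℂ) with hgi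
    have step : (w ᵥ* gi) j = ((g : Matrix (Fin (m+1)) (Fin (m+1)) ℂ) * gi) (Fin.last m) j := by
      rw [Matrix.mul_apply, Matrix.vecMul]
      simp only [dotProduct]
      congr 1
      ext k
      rw [hg k]
    rw [step, hgi]
    have : (g : Matrix (Fin (m+1)) (Fin (m+1)) ℂ)
        * ((g⁻¹ : (Matrix (Fin (m+1)) (Fin (m+1)) ℂ)ˣ) : Matrix (Fin (m+1)) (Fin (m+1)) ℂ)
        = 1 := Units.mul_inv g
    rw [this]
    exact Matrix.one_apply_ne (Ne.symm hj)

/-- a nonzero left kernel covector for a `(m+1) × m` matrix -/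
lemma exists_left_kernel {m : ℕ} (v : Matrix (Fin (m+1)) (Fin m) ℂ) :
    ∃ u : Fin (m+1) → ℂ, u ≠ 0 ∧ u ᵥ* v = 0 := by
  have hni : ¬ Function.Injective (Matrix.mulVecLin vᵀ) := by
    intro hinj
    have := LinearMap.finrank_le_finrank_of_injective hinj
    rw [Module.finrank_fintype_fun_eq_card, Module.finrank_fintype_fun_eq_card,
      Fintype.card_fin, Fintype.card_fin] at this
    omega
  rw [Function.not_injective_iff] at hni
  obtain ⟨x, y, hxy, hne⟩ := hni
  refine ⟨x - y, sub_ne_zero.2 hne, ?_⟩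
  have hz : Matrix.mulVecLin vᵀ (x - y) = 0 := by rw [map_sub, hxy, sub_self]
  simpa [Matrix.sub_vecMul] using hz

end SqAux
-- PART I: necessity, easy cases
namespace SqAux
open Matrix Kronecker MvPolynomial

lemma detDiagConst (k : ℕ) (s : ℂ) :
    (Matrix.diagonal (fun _ : Fin k => s)).det = s ^ k := by
  rw [Matrix.det_diagonal, Finset.prod_const, Finset.card_univ, Fintype.card_fin]

lemma detDiagFam (k : ℕ) (s : ℂ) :
    (Matrix.diagonal (fun i : Fin (k+1) => if (i:ℕ) < k then s else 1)).det = s ^ k := by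
  rw [Matrix.det_diagonal, Fin.prod_univ_castSucc]
  simp only [Fin.coe_castSucc, Fin.is_lt, if_true, Fin.val_last, lt_irrefl, if_false]
  rw [Finset.prod_const, Finset.card_univ, Fintype.card_fin, mul_one]

lemma zpow_pow_col (s : ℂ) (k : ℕ) (t : ℤ) : ((s ^ k) ^ t) = s ^ ((k:ℤ)*t) := by
  rw [← zpow_natCast s k, ← _root_.zpow_mul]

lemma diag_conj_entry {a b : ℕ} (d : Fin a → ℂ) (e : Fin b → ℂ)
    (v : Matrix (Fin a) (Fin b) ℂ) (i : Fin a) (j : Fin b) :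
    (Matrix.diagonal d * v * Matrix.diagonal e) i j = d i * v i j * e j := by
  rw [Matrix.mul_diagonal, Matrix.diagonal_mul]

variable {p : ℕ} {σ₁ σ₂ σ₃ σ₄ : ℤ} {f : MvPolynomial (SqVars (p+1) (p+1) (p+1) (p+2)) ℂ}

lemma exists_point (hf0 : f ≠ 0) :
    ∃ π : SqVars (p+1) (p+1) (p+1) (p+2) → ℂ, MvPolynomial.eval π f ≠ 0 := by
  by_contra h
  push_neg at h
  exact hf0 (MvPolynomial.funext (q := 0) (fun x => by simp [h x]))

lemma eval_eq_sqEval (π : SqVars (p+1) (p+1) (p+1) (p+2) → ℂ)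
    (f : MvPolynomial (SqVars (p+1) (p+1) (p+1) (p+2)) ℂ) :
    MvPolynomial.eval π f = sqEval f (Matrix.of fun i j => π (.inl (i,j)))
      (Matrix.of fun i j => π (.inr (.inl (i,j))))
      (Matrix.of fun i j => π (.inr (.inr (.inl (i,j)))))
      (Matrix.of fun i j => π (.inr (.inr (.inr (i,j))))) := by
  have hfun : (Sum.elim (fun q => (Matrix.of fun i j => π (.inl (i,j))) q.1 q.2) <|
      Sum.elim (fun q => (Matrix.of fun i j => π (.inr (.inl (i,j)))) q.1 q.2) <|
      Sum.elim (fun q => (Matrix.of fun i j => π (.inr (.inr (.inl (i,j))))) q.1 q.2)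
        (fun q => (Matrix.of fun i j => π (.inr (.inr (.inr (i,j))))) q.1 q.2)) = π := by
    funext v
    rcases v with ⟨i,j⟩ | ⟨i,j⟩ | ⟨i,j⟩ | ⟨i,j⟩ <;> rfl
  unfold sqEval
  rw [hfun]

/-- Case 4 : the weight must pair to zero with the dimension vector. -/
lemma nec_sum (hf0 : f ≠ 0) (hf : IsSqSemiInvariant σ₁ σ₂ σ₃ σ₄ f) :
    ((p:ℤ)+1)*σ₁ + ((p:ℤ)+1)*σ₂ + ((p:ℤ)+1)*σ₃ + ((p:ℤ)+2)*σ₄ = 0 := by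
  obtain ⟨π, hπ⟩ := exists_point hf0
  set M : ℤ := ((p:ℤ)+1)*σ₁ + ((p:ℤ)+1)*σ₂ + ((p:ℤ)+1)*σ₃ + ((p:ℤ)+2)*σ₄ with hMdef
  set v₁ : Matrix (Fin (p+1)) (Fin (p+1)) ℂ := Matrix.of fun i j => π (.inl (i,j)) with hv₁
  set v₂ : Matrix (Fin (p+1)) (Fin (p+1)) ℂ := Matrix.of fun i j => π (.inr (.inl (i,j))) with hv₂
  set v₃ : Matrix (Fin (p+2)) (Fin (p+1)) ℂ :=
    Matrix.of fun i j => π (.inr (.inr (.inl (i,j)))) with hv₃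
  set v₄ : Matrix (Fin (p+2)) (Fin (p+1)) ℂ :=
    Matrix.of fun i j => π (.inr (.inr (.inr (i,j)))) with hv₄
  set c : ℂ := MvPolynomial.eval π f with hc
  have hceq : c = sqEval f v₁ v₂ v₃ v₄ := eval_eq_sqEval π f
  have key : ∀ s : ℂ, s ≠ 0 → c = s ^ (-M) * c := by
    intro s hs
    have hd1 : ∀ i : Fin (p+1), (fun _ : Fin (p+1) => s) i ≠ 0 := fun _ => hs
    have hd2 : ∀ i : Fin (p+2), (fun _ : Fin (p+2) => s) i ≠ 0 := fun _ => hs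
    have h := hf (diagU _ hd1) (diagU _ hd1) (diagU _ hd1) (diagU _ hd2) v₁ v₂ v₃ v₄
    have fix : ∀ {a b : ℕ} (v : Matrix (Fin a) (Fin b) ℂ),
        Matrix.diagonal (fun _ : Fin a => s) * v
          * Matrix.diagonal (fun _ : Fin b => (s)⁻¹) = v := by
      intro a b v
      ext i j
      rw [diag_conj_entry, mul_right_comm, mul_inv_cancel₀ hs, one_mul]
    simp only [← Matrix.coe_units_inv] at h
    simp only [diagU_coe, diagU_inv_coe] at h
    rw [fix v₁, fix v₂, fix v₃, fix v₄, detDiagConst, detDiagConst,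
      zpow_pow_col, zpow_pow_col, zpow_pow_col, zpow_pow_col, ← hceq,
      ← zpow_add₀ hs, ← zpow_add₀ hs, ← zpow_add₀ hs] at h
    convert h using 3
    rw [hMdef]
    push_cast
    ring
  have key2 : ∀ s : ℂ, s ≠ 0 → c = s ^ M * c := by
    intro s hs
    have h1 : s ^ M * (s ^ (-M) * c) = c := by
      rw [← mul_assoc, ← zpow_add₀ hs, add_neg_cancel, zpow_zero, one_mul]
    calc c = s ^ M * (s ^ (-M) * c) := h1.symm
      _ = s ^ M * c := by rw [← key s hs]
  have hposneg : 0 ≤ -M := by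
    apply eval_family (fun v => Polynomial.C (π v)) f hπ
    intro s hs
    have he : (fun v => (Polynomial.C (π v)).eval s) = π := by funext v; simp
    rw [he, show MvPolynomial.eval π f = c from hc.symm]
    exact key s hs
  have hpos : 0 ≤ M := by
    apply eval_family (fun v => Polynomial.C (π v)) f hπ
    intro s hs
    have he : (fun v => (Polynomial.C (π v)).eval s) = π := by funext v; simp
    rw [he, show MvPolynomial.eval π f = c from hc.symm]
    exact key2 s hs
  omega

end SqAux
-- PART J: necessity of σ₄ ≤ 0
namespace SqAux
open Matrix Kronecker MvPolynomial

variable {p : ℕ} {σ₁ σ₂ σ₃ σ₄ : ℤ} {f : MvPolynomial (SqVars (p+1) (p+1) (p+1) (p+2)) ℂ}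

lemma nec_sigma4 (hf0 : f ≠ 0) (hf : IsSqSemiInvariant σ₁ σ₂ σ₃ σ₄ f) : σ₄ ≤ 0 := by
  obtain ⟨π, hπ⟩ := exists_point hf0
  set v₁ : Matrix (Fin (p+1)) (Fin (p+1)) ℂ := Matrix.of fun i j => π (.inl (i,j)) with hv₁
  set v₂ : Matrix (Fin (p+1)) (Fin (p+1)) ℂ := Matrix.of fun i j => π (.inr (.inl (i,j))) with hv₂
  set v₃ : Matrix (Fin (p+2)) (Fin (p+1)) ℂ :=
    Matrix.of fun i j => π (.inr (.inr (.inl (i,j)))) with hv₃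
  set v₄ : Matrix (Fin (p+2)) (Fin (p+1)) ℂ :=
    Matrix.of fun i j => π (.inr (.inr (.inr (i,j)))) with hv₄
  set c : ℂ := MvPolynomial.eval π f with hc
  have hceq : c = sqEval f v₁ v₂ v₃ v₄ := eval_eq_sqEval π f
  set B : SqVars (p+1) (p+1) (p+1) (p+2) → Polynomial ℂ := fun v =>
    match v with
    | .inl (i,j) => Polynomial.C (v₁ i j)
    | .inr (.inl (i,j)) => Polynomial.C (v₂ i j)
    | .inr (.inr (.inl (i,j))) => Polynomial.X * Polynomial.C (v₃ i j)
    | .inr (.inr (.inr (i,j))) => Polynomial.X * Polynomial.C (v₄ i j) with hB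
  have hineq : 0 ≤ ((p:ℤ)+2) * (-σ₄) := by
    apply eval_family B f hπ
    intro s hs
    have hd2 : ∀ i : Fin (p+2), (fun _ : Fin (p+2) => s) i ≠ 0 := fun _ => hs
    have h := hf 1 1 1 (diagU _ hd2) v₁ v₂ v₃ v₄
    simp only [← Matrix.coe_units_inv] at h
    simp only [diagU_coe, diagU_inv_coe, inv_one, Units.val_one, Matrix.one_mul,
      Matrix.mul_one, Matrix.det_one, _root_.one_zpow, one_mul] at h
    rw [detDiagConst, zpow_pow_col, ← hceq] at h
    have hasg : (fun v => (B v).eval s)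
        = (Sum.elim (fun q => v₁ q.1 q.2) <| Sum.elim (fun q => v₂ q.1 q.2) <|
          Sum.elim (fun q => ((Matrix.diagonal (fun _ : Fin (p+2) => s)) * v₃) q.1 q.2)
            (fun q => ((Matrix.diagonal (fun _ : Fin (p+2) => s)) * v₄) q.1 q.2)) := by
      funext v
      rcases v with ⟨i,j⟩ | ⟨i,j⟩ | ⟨i,j⟩ | ⟨i,j⟩ <;>
        simp [hB, Matrix.diagonal_mul] <;> ring
    show MvPolynomial.eval (fun v => (B v).eval s) f = _
    rw [hasg]
    exact h
  have hp2 : (0:ℤ) < (p:ℤ) + 2 := by positivity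
  nlinarith
end SqAux
-- PART K: necessity of 0 ≤ σ₁ + σ₂ + σ₄
namespace SqAux
open Matrix Kronecker MvPolynomial

variable {p : ℕ} {σ₁ σ₂ σ₃ σ₄ : ℤ} {f : MvPolynomial (SqVars (p+1) (p+1) (p+1) (p+2)) ℂ}

lemma fin_eq_last_of_not_lt {k : ℕ} {i : Fin (k+1)} (h : ¬ (i:ℕ) < k) : i = Fin.last k := by
  apply Fin.ext
  have := i.isLt
  simp only [Fin.val_last]
  omega

lemma fin_ne_last_of_lt {k : ℕ} {j : Fin (k+1)} (h : (j:ℕ) < k) : j ≠ Fin.last k := by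
  intro hje
  rw [hje] at h
  simp at h

set_option maxHeartbeats 1000000 in
lemma nec_ineq1 (hf0 : f ≠ 0) (hf : IsSqSemiInvariant σ₁ σ₂ σ₃ σ₄ f) : 0 ≤ σ₁ + σ₂ + σ₄ := by
  have hM := nec_sum hf0 hf
  obtain ⟨π, hπ⟩ := exists_point hf0
  set v₁ : Matrix (Fin (p+1)) (Fin (p+1)) ℂ := Matrix.of fun i j => π (.inl (i,j)) with hv₁
  set v₂ : Matrix (Fin (p+1)) (Fin (p+1)) ℂ := Matrix.of fun i j => π (.inr (.inl (i,j))) with hv₂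
  set v₃ : Matrix (Fin (p+2)) (Fin (p+1)) ℂ :=
    Matrix.of fun i j => π (.inr (.inr (.inl (i,j)))) with hv₃
  set v₄ : Matrix (Fin (p+2)) (Fin (p+1)) ℂ :=
    Matrix.of fun i j => π (.inr (.inr (.inr (i,j)))) with hv₄
  set c : ℂ := MvPolynomial.eval π f with hc
  have hceq : c = sqEval f v₁ v₂ v₃ v₄ := eval_eq_sqEval π f
  obtain ⟨u, hu0, huv⟩ := exists_left_kernel v₄
  obtain ⟨h₄, hh₄⟩ := exists_unit_lastRow u hu0
  obtain ⟨h₂, hh₂⟩ := exists_unit_vecMul_inv (u ᵥ* v₃)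
  set r : Fin (p+1) → ℂ :=
    (fun k => (h₂ : Matrix (Fin (p+1)) (Fin (p+1)) ℂ) (Fin.last p) k) ᵥ* v₁ with hr
  obtain ⟨h₁, hh₁⟩ := exists_unit_vecMul_inv r
  have hbase := hf h₁ h₂ 1 h₄ v₁ v₂ v₃ v₄
  simp only [← Matrix.coe_units_inv, Units.val_one, inv_one, Matrix.one_mul, Matrix.mul_one,
    Matrix.det_one, _root_.one_zpow, one_mul, mul_one] at hbase
  set w₁ : Matrix (Fin (p+1)) (Fin (p+1)) ℂ :=
    (h₂ : Matrix (Fin (p+1)) (Fin (p+1)) ℂ) * v₁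
      * ((h₁⁻¹ : (Matrix (Fin (p+1)) (Fin (p+1)) ℂ)ˣ) : Matrix (Fin (p+1)) (Fin (p+1)) ℂ)
    with hw₁
  set w₂ : Matrix (Fin (p+1)) (Fin (p+1)) ℂ :=
    v₂ * ((h₁⁻¹ : (Matrix (Fin (p+1)) (Fin (p+1)) ℂ)ˣ) : Matrix (Fin (p+1)) (Fin (p+1)) ℂ)
    with hw₂
  set w₃ : Matrix (Fin (p+2)) (Fin (p+1)) ℂ :=
    (h₄ : Matrix (Fin (p+2)) (Fin (p+2)) ℂ) * v₃
      * ((h₂⁻¹ : (Matrix (Fin (p+1)) (Fin (p+1)) ℂ)ˣ) : Matrix (Fin (p+1)) (Fin (p+1)) ℂ)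
    with hw₃
  set w₄ : Matrix (Fin (p+2)) (Fin (p+1)) ℂ :=
    (h₄ : Matrix (Fin (p+2)) (Fin (p+2)) ℂ) * v₄ with hw₄
  set c' : ℂ := sqEval f w₁ w₂ w₃ w₄ with hc'
  have hc'0 : c' ≠ 0 := by
    rw [hbase]
    refine mul_ne_zero (mul_ne_zero (mul_ne_zero
      (zpow_ne_zero _ (det_unit_ne_zero h₁)) (zpow_ne_zero _ (det_unit_ne_zero h₂)))
      (zpow_ne_zero _ (det_unit_ne_zero h₄))) ?_
    rw [← hceq]
    exact hπ
  -- zero patterns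
  have Z4 : ∀ j, w₄ (Fin.last (p+1)) j = 0 := by
    intro j
    have hz : (u ᵥ* v₄) j = 0 := by rw [huv]; rfl
    rw [hw₄, Matrix.mul_apply]
    simpa [Matrix.vecMul, dotProduct, hh₄] using hz
  have Z3 : ∀ j, j ≠ Fin.last p → w₃ (Fin.last (p+1)) j = 0 := by
    intro j hj
    have hz := hh₂ j hj
    rw [Matrix.vecMul_vecMul] at hz
    rw [hw₃, Matrix.mul_assoc, Matrix.mul_apply]
    simpa [Matrix.vecMul, dotProduct, hh₄] using hz
  have Z1 : ∀ j, j ≠ Fin.last p → w₁ (Fin.last p) j = 0 := by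
    intro j hj
    have hz := hh₁ j hj
    rw [hr, Matrix.vecMul_vecMul] at hz
    rw [hw₁, Matrix.mul_assoc, Matrix.mul_apply]
    simpa [Matrix.vecMul, dotProduct] using hz
  -- the degeneration family
  set B : SqVars (p+1) (p+1) (p+1) (p+2) → Polynomial ℂ :=
    Sum.elim (fun q : Fin (p+1) × Fin (p+1) =>
      if ((q.1:ℕ)) < p then (if ((q.2:ℕ)) < p then Polynomial.C (w₁ q.1 q.2)
        else Polynomial.X * Polynomial.C (w₁ q.1 q.2))
      else (if ((q.2:ℕ)) < p then 0 else Polynomial.C (w₁ q.1 q.2))) <|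
    Sum.elim (fun q : Fin (p+1) × Fin (p+1) =>
      if ((q.2:ℕ)) < p then Polynomial.C (w₂ q.1 q.2)
        else Polynomial.X * Polynomial.C (w₂ q.1 q.2)) <|
    Sum.elim (fun q : Fin (p+2) × Fin (p+1) =>
      if ((q.1:ℕ)) < p+1 then (if ((q.2:ℕ)) < p then Polynomial.C (w₃ q.1 q.2)
        else Polynomial.X * Polynomial.C (w₃ q.1 q.2))
      else (if ((q.2:ℕ)) < p then 0 else Polynomial.C (w₃ q.1 q.2)))
    (fun q : Fin (p+2) × Fin (p+1) =>
      if ((q.1:ℕ)) < p+1 then Polynomial.C (w₄ q.1 q.2) else 0) with hB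
  have hineq : 0 ≤ (p:ℤ)*(-σ₁) + (p:ℤ)*(-σ₂) + ((p:ℤ)+1)*(-σ₃) + ((p:ℤ)+1)*(-σ₄) := by
    apply eval_family B f hc'0
    intro s hs
    have hd2 : ∀ i : Fin (p+1), (fun i : Fin (p+1) => if (i:ℕ) < p then s else 1) i ≠ 0 := by
      intro i
      by_cases hi : (i:ℕ) < p <;> simp [hi, hs]
    have hd4 : ∀ i : Fin (p+2), (fun i : Fin (p+2) => if (i:ℕ) < p+1 then s else 1) i ≠ 0 := by
      intro i
      by_cases hi : (i:ℕ) < p+1 <;> simp [hi, hs]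
    have hdc : ∀ i : Fin (p+1), (fun _ : Fin (p+1) => s) i ≠ 0 := fun _ => hs
    have h := hf (diagU _ hd2) (diagU _ hd2) (diagU _ hdc) (diagU _ hd4) w₁ w₂ w₃ w₄
    simp only [← Matrix.coe_units_inv] at h
    simp only [diagU_coe, diagU_inv_coe] at h
    rw [detDiagFam, detDiagConst, detDiagFam, ← hc'] at h
    rw [zpow_pow_col, zpow_pow_col, zpow_pow_col, zpow_pow_col,
      ← zpow_add₀ hs, ← zpow_add₀ hs, ← zpow_add₀ hs] at h
    have hasg : (fun v => (B v).eval s)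
        = (Sum.elim (fun q => (Matrix.diagonal (fun i : Fin (p+1) => if (i:ℕ) < p then s else 1)
              * w₁ * Matrix.diagonal
                (fun i : Fin (p+1) => (if (i:ℕ) < p then s else 1)⁻¹)) q.1 q.2) <|
          Sum.elim (fun q => (Matrix.diagonal (fun _ : Fin (p+1) => s)
              * w₂ * Matrix.diagonal
                (fun i : Fin (p+1) => (if (i:ℕ) < p then s else 1)⁻¹)) q.1 q.2) <|
          Sum.elim (fun q => (Matrix.diagonal (fun i : Fin (p+2) => if (i:ℕ) < p+1 then s else 1)
              * w₃ * Matrix.diagonal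
                (fun i : Fin (p+1) => (if (i:ℕ) < p then s else 1)⁻¹)) q.1 q.2)
            (fun q => (Matrix.diagonal (fun i : Fin (p+2) => if (i:ℕ) < p+1 then s else 1)
              * w₄ * Matrix.diagonal (fun _ : Fin (p+1) => s⁻¹)) q.1 q.2)) := by
      funext v
      rcases v with ⟨i,j⟩ | ⟨i,j⟩ | ⟨i,j⟩ | ⟨i,j⟩
      · show (B (Sum.inl (i,j))).eval s = _
        rw [Sum.elim_inl, diag_conj_entry]
        by_cases hi : (i:ℕ) < p
        · by_cases hj : (j:ℕ) < p
          · simp only [hB, Sum.elim_inl, hi, hj, if_true, Polynomial.eval_C]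
            rw [mul_right_comm, mul_inv_cancel₀ hs, one_mul]
          · simp only [hB, Sum.elim_inl, hi, hj, if_true, if_false, Polynomial.eval_mul,
              Polynomial.eval_X, Polynomial.eval_C, inv_one, mul_one]
        · by_cases hj : (j:ℕ) < p
          · simp only [hB, Sum.elim_inl, hi, hj, if_true, if_false, Polynomial.eval_zero,
              one_mul]
            rw [fin_eq_last_of_not_lt hi, Z1 j (fin_ne_last_of_lt hj), zero_mul]
          · simp only [hB, Sum.elim_inl, hi, hj, if_false, Polynomial.eval_C, inv_one,
              one_mul, mul_one]
      · show (B (Sum.inr (Sum.inl (i,j)))).eval s = _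
        rw [Sum.elim_inr, Sum.elim_inl, diag_conj_entry]
        by_cases hj : (j:ℕ) < p
        · simp only [hB, Sum.elim_inr, Sum.elim_inl, hj, if_true, Polynomial.eval_C]
          rw [mul_right_comm, mul_inv_cancel₀ hs, one_mul]
        · simp only [hB, Sum.elim_inr, Sum.elim_inl, hj, if_false, Polynomial.eval_mul,
            Polynomial.eval_X, Polynomial.eval_C, inv_one, mul_one]
      · show (B (Sum.inr (Sum.inr (Sum.inl (i,j))))).eval s = _
        rw [Sum.elim_inr, Sum.elim_inr, Sum.elim_inl, diag_conj_entry]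
        by_cases hi : (i:ℕ) < p+1
        · by_cases hj : (j:ℕ) < p
          · simp only [hB, Sum.elim_inr, Sum.elim_inl, hi, hj, if_true, Polynomial.eval_C]
            rw [mul_right_comm, mul_inv_cancel₀ hs, one_mul]
          · simp only [hB, Sum.elim_inr, Sum.elim_inl, hi, hj, if_true, if_false,
              Polynomial.eval_mul, Polynomial.eval_X, Polynomial.eval_C, inv_one, mul_one]
        · by_cases hj : (j:ℕ) < p
          · simp only [hB, Sum.elim_inr, Sum.elim_inl, hi, hj, if_true, if_false,
              Polynomial.eval_zero, one_mul]
            rw [fin_eq_last_of_not_lt hi, Z3 j (fin_ne_last_of_lt hj), zero_mul]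
          · simp only [hB, Sum.elim_inr, Sum.elim_inl, hi, hj, if_false, Polynomial.eval_C,
              inv_one, one_mul, mul_one]
      · show (B (Sum.inr (Sum.inr (Sum.inr (i,j))))).eval s = _
        rw [Sum.elim_inr, Sum.elim_inr, Sum.elim_inr, diag_conj_entry]
        by_cases hi : (i:ℕ) < p+1
        · simp only [hB, Sum.elim_inr, hi, if_true, Polynomial.eval_C]
          rw [mul_right_comm, mul_inv_cancel₀ hs, one_mul]
        · simp only [hB, Sum.elim_inr, hi, if_false, Polynomial.eval_zero, one_mul]
          rw [fin_eq_last_of_not_lt hi, Z4 j, zero_mul]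
    show MvPolynomial.eval (fun v => (B v).eval s) f = _
    rw [hasg]
    unfold sqEval at h
    rw [h]
    congr 2
  have hfin : σ₁ + σ₂ + σ₄
      = (p:ℤ)*(-σ₁) + (p:ℤ)*(-σ₂) + ((p:ℤ)+1)*(-σ₃) + ((p:ℤ)+1)*(-σ₄) := by
    linear_combination hM
  rw [hfin]
  exact hineq

end SqAux
-- PART L: the 2↔3 symmetry and final theorem
namespace SqAux
open Matrix Kronecker MvPolynomial

def swapVars (k m : ℕ) : SqVars k k k m ≃ SqVars k k k m where
  toFun := fun x =>
    match x with
    | .inl a => .inr (.inl a)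
    | .inr (.inl a) => .inl a
    | .inr (.inr (.inl a)) => .inr (.inr (.inr a))
    | .inr (.inr (.inr a)) => .inr (.inr (.inl a))
  invFun := fun x =>
    match x with
    | .inl a => .inr (.inl a)
    | .inr (.inl a) => .inl a
    | .inr (.inr (.inl a)) => .inr (.inr (.inr a))
    | .inr (.inr (.inr a)) => .inr (.inr (.inl a))
  left_inv := by rintro (a | a | a | a) <;> rfl
  right_inv := by rintro (a | a | a | a) <;> rfl

lemma sqEval_rename {k m : ℕ} (f : MvPolynomial (SqVars k k k m) ℂ)
    (x₁ x₂ : Matrix (Fin k) (Fin k) ℂ) (x₃ x₄ : Matrix (Fin m) (Fin k) ℂ) :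
    sqEval (rename (swapVars k m) f) x₁ x₂ x₃ x₄ = sqEval f x₂ x₁ x₄ x₃ := by
  unfold sqEval
  rw [MvPolynomial.eval_rename]
  have : ((Sum.elim (fun q => x₁ q.1 q.2) <| Sum.elim (fun q => x₂ q.1 q.2) <|
      Sum.elim (fun q => x₃ q.1 q.2) (fun q => x₄ q.1 q.2)) ∘ ⇑(swapVars k m))
      = (Sum.elim (fun q => x₂ q.1 q.2) <| Sum.elim (fun q => x₁ q.1 q.2) <|
      Sum.elim (fun q => x₄ q.1 q.2) (fun q => x₃ q.1 q.2)) := by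
    funext v
    rcases v with ⟨i,j⟩ | ⟨i,j⟩ | ⟨i,j⟩ | ⟨i,j⟩ <;> rfl
  rw [this]

lemma isSq_swap {k m : ℕ} {σ₁ σ₂ σ₃ σ₄ : ℤ} {f : MvPolynomial (SqVars k k k m) ℂ}
    (hf : IsSqSemiInvariant σ₁ σ₂ σ₃ σ₄ f) :
    IsSqSemiInvariant σ₁ σ₃ σ₂ σ₄ (rename (swapVars k m) f) := by
  intro g₁ g₂ g₃ g₄ v₁ v₂ v₃ v₄
  rw [sqEval_rename, sqEval_rename]
  rw [hf g₁ g₃ g₂ g₄ v₂ v₁ v₄ v₃]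
  ring

end SqAux

/-- for the square quiver with dimension vector `(n, n, n, n+1)`, a weight
`(σ₁, σ₂, σ₃, σ₄)` admits a nonzero semi-invariant iff `σ₁ + σ₂ + σ₄ ≥ 0`,
`σ₁ + σ₃ + σ₄ ≥ 0`, `σ₄ ≤ 0`, and `n σ₁ + n σ₂ + n σ₃ + (n+1) σ₄ = 0`. -/
theorem sq_semiinvariant_iff_nnnn1 (n : ℕ) (hn : 1 ≤ n) (σ₁ σ₂ σ₃ σ₄ : ℤ) :
    (∃ f : MvPolynomial (SqVars n n n (n + 1)) ℂ, f ≠ 0 ∧ IsSqSemiInvariant σ₁ σ₂ σ₃ σ₄ f)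
      ↔ (0 ≤ σ₁ + σ₂ + σ₄ ∧ 0 ≤ σ₁ + σ₃ + σ₄ ∧ σ₄ ≤ 0 ∧
          (n : ℤ) * σ₁ + (n : ℤ) * σ₂ + (n : ℤ) * σ₃ + ((n : ℤ) + 1) * σ₄ = 0) := by
  obtain ⟨p, rfl⟩ : ∃ p, n = p + 1 := ⟨n - 1, by omega⟩
  constructor
  · rintro ⟨f, hf0, hf⟩
    have hswap0 : MvPolynomial.rename (SqAux.swapVars (p+1) (p+2)) f ≠ 0 := fun h =>
      hf0 (MvPolynomial.rename_injective _ (Equiv.injective _) (by simpa using h))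
    have hM := SqAux.nec_sum (p := p) hf0 hf
    refine ⟨SqAux.nec_ineq1 hf0 hf, SqAux.nec_ineq1 hswap0 (SqAux.isSq_swap hf),
      SqAux.nec_sigma4 hf0 hf, ?_⟩
    push_cast at hM ⊢
    linarith
  · rintro ⟨h1, h2, h3, h4⟩
    have h4' : ((p:ℤ)+1)*σ₁ + ((p:ℤ)+1)*σ₂ + ((p:ℤ)+1)*σ₃ + ((p:ℤ)+2)*σ₄ = 0 := by
      push_cast at h4 ⊢
      linarith
    exact SqAux.sq_sufficiency p σ₁ σ₂ σ₃ σ₄ h1 h2 h3 h4'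
end

section
/- Let n ≥ 1 and consider the square quiver with dimension vector (n₁, n₂, n₃, n₄) = (n, n, n+1, n+1). A weight σ = (σ₁, σ₂, σ₃, σ₄) ∈ ℤ⁴ admits a nonzero semi-invariant polynomial if and only if σ₁ + σ₂ ≥ 0, σ₁ + σ₃ + σ₄ ≥ 0, σ₃ ≥ 0, and n σ₁ + n σ₂ + (n+1) σ₃ + (n+1) σ₄ = 0. -/
open Matrix MvPolynomial

noncomputable section


/-- determinant of the identity with row `k` replaced by `u` -/
lemma det_updateRow_one {m : ℕ} (u : Fin m → ℂ) (k : Fin m) :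
    ((1 : Matrix (Fin m) (Fin m) ℂ).updateRow k u).det = u k := by
  have hu : u = ∑ j : Fin m, u j • (1 : Matrix (Fin m) (Fin m) ℂ) j := by
    funext q
    simp [Matrix.one_apply]
  calc ((1 : Matrix (Fin m) (Fin m) ℂ).updateRow k u).det
      = ((1 : Matrix (Fin m) (Fin m) ℂ).updateRow k
          (∑ j : Fin m, u j • (1 : Matrix (Fin m) (Fin m) ℂ) j)).det := by rw [← hu]
    _ = u k • (1 : Matrix (Fin m) (Fin m) ℂ).det := Matrix.det_updateRow_sum _ _ _
    _ = u k := by simp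

/-- invertible matrix whose `k`-th row is `u` -/
def rowUnit {m : ℕ} (u : Fin m → ℂ) (k : Fin m) (h : u k ≠ 0) :
    (Matrix (Fin m) (Fin m) ℂ)ˣ :=
  ((Matrix.isUnit_iff_isUnit_det _).mpr (by rw [det_updateRow_one]; exact h.isUnit)).unit

lemma rowUnit_row {m : ℕ} (u : Fin m → ℂ) (k : Fin m) (h : u k ≠ 0) :
    (rowUnit u k h : Matrix (Fin m) (Fin m) ℂ) k = u := by
  have : (rowUnit u k h : Matrix (Fin m) (Fin m) ℂ)
      = (1 : Matrix (Fin m) (Fin m) ℂ).updateRow k u := IsUnit.unit_spec _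
  rw [this, Matrix.updateRow_self]

/-- a nonzero vector killing a `(m+1) × m` matrix from the left -/
lemma exists_left_kill {m : ℕ} (M : Matrix (Fin (m+1)) (Fin m) ℂ) :
    ∃ u : Fin (m+1) → ℂ, u ≠ 0 ∧ ∀ c, ∑ p, u p * M p c = 0 := by
  set M' : Matrix (Fin (m+1)) (Fin (m+1)) ℂ :=
    Matrix.of (fun p q => if h : (q : ℕ) < m then M p ⟨q, h⟩ else 0) with hM'
  have hdet : M'.det = 0 := by
    apply Matrix.det_eq_zero_of_column_eq_zero ⟨m, Nat.lt_succ_self m⟩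
    intro i
    simp [hM']
  obtain ⟨u, hu0, hu⟩ := (Matrix.exists_vecMul_eq_zero_iff).mpr hdet
  refine ⟨u, hu0, fun c => ?_⟩
  have := congrFun hu ⟨(c : ℕ), c.isLt.trans (Nat.lt_succ_self m)⟩
  simp only [Matrix.vecMul, dotProduct, hM'] at this
  simpa [c.isLt] using this

/-- diagonal unit with `t` in position `k` and `1` elsewhere -/
def dUnit {m : ℕ} (t : ℂˣ) (k : Fin m) : (Matrix (Fin m) (Fin m) ℂ)ˣ where
  val := Matrix.diagonal (fun i => if i = k then (t : ℂ) else 1)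
  inv := Matrix.diagonal (fun i => if i = k then ((t⁻¹ : ℂˣ) : ℂ) else 1)
  val_inv := by
    rw [Matrix.diagonal_mul_diagonal]
    have : (fun i => (if i = k then (t : ℂ) else 1) * (if i = k then ((t⁻¹ : ℂˣ) : ℂ) else 1))
        = fun _ => (1 : ℂ) := by
      funext i; by_cases h : i = k <;> simp [h]
    rw [this, Matrix.diagonal_one]
  inv_val := by
    rw [Matrix.diagonal_mul_diagonal]
    have : (fun i => (if i = k then ((t⁻¹ : ℂˣ) : ℂ) else 1) * (if i = k then (t : ℂ) else 1))
        = fun _ => (1 : ℂ) := by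
      funext i; by_cases h : i = k <;> simp [h]
    rw [this, Matrix.diagonal_one]

@[simp] lemma dUnit_val {m : ℕ} (t : ℂˣ) (k : Fin m) :
    (dUnit t k : Matrix (Fin m) (Fin m) ℂ) = Matrix.diagonal (fun i => if i = k then (t : ℂ) else 1) := rfl

@[simp] lemma dUnit_inv_val {m : ℕ} (t : ℂˣ) (k : Fin m) :
    ((dUnit t k)⁻¹ : (Matrix (Fin m) (Fin m) ℂ)ˣ).val
      = Matrix.diagonal (fun i => if i = k then ((t⁻¹ : ℂˣ) : ℂ) else 1) := rfl

@[simp] lemma dUnit_det {m : ℕ} (t : ℂˣ) (k : Fin m) :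
    (dUnit t k : Matrix (Fin m) (Fin m) ℂ).det = (t : ℂ) := by
  rw [dUnit_val, Matrix.det_diagonal]
  rw [Finset.prod_ite_eq' Finset.univ k (fun _ => (t : ℂ))]
  simp

/-- scalar unit -/
def sUnit (t : ℂˣ) (m : ℕ) : (Matrix (Fin m) (Fin m) ℂ)ˣ where
  val := (t : ℂ) • 1
  inv := ((t⁻¹ : ℂˣ) : ℂ) • 1
  val_inv := by rw [Matrix.smul_mul, Matrix.mul_smul, smul_smul]; simp
  inv_val := by rw [Matrix.smul_mul, Matrix.mul_smul, smul_smul]; simp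

@[simp] lemma sUnit_val (t : ℂˣ) (m : ℕ) :
    (sUnit t m : Matrix (Fin m) (Fin m) ℂ) = (t : ℂ) • 1 := rfl

@[simp] lemma sUnit_inv_val (t : ℂˣ) (m : ℕ) :
    ((sUnit t m)⁻¹ : (Matrix (Fin m) (Fin m) ℂ)ˣ).val = ((t⁻¹ : ℂˣ) : ℂ) • 1 := rfl

lemma sUnit_conj {a b : ℕ} (t : ℂˣ) (v : Matrix (Fin a) (Fin b) ℂ) :
    (sUnit t a : Matrix (Fin a) (Fin a) ℂ) * v * ((sUnit t b)⁻¹ : (Matrix (Fin b) (Fin b) ℂ)ˣ).val = v := by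
  rw [sUnit_val, sUnit_inv_val, Matrix.smul_mul, Matrix.one_mul, Matrix.mul_smul, Matrix.mul_one,
    smul_smul]
  simp

@[simp] lemma sUnit_det (t : ℂˣ) (m : ℕ) :
    (sUnit t m : Matrix (Fin m) (Fin m) ℂ).det = (t : ℂ) ^ m := by
  rw [sUnit_val, Matrix.det_smul]
  simp

lemma det_unit_ne_zero {m : ℕ} (g : (Matrix (Fin m) (Fin m) ℂ)ˣ) :
    (g : Matrix (Fin m) (Fin m) ℂ).det ≠ 0 := by
  have := (Matrix.isUnit_iff_isUnit_det (g : Matrix (Fin m) (Fin m) ℂ)).mp g.isUnit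
  exact this.ne_zero

lemma det_unit_inv {m : ℕ} (g : (Matrix (Fin m) (Fin m) ℂ)ˣ) :
    ((g⁻¹ : (Matrix (Fin m) (Fin m) ℂ)ˣ) : Matrix (Fin m) (Fin m) ℂ).det
      = ((g : Matrix (Fin m) (Fin m) ℂ).det)⁻¹ := by
  have h : ((g⁻¹ : (Matrix (Fin m) (Fin m) ℂ)ˣ) : Matrix (Fin m) (Fin m) ℂ).det
      * (g : Matrix (Fin m) (Fin m) ℂ).det = 1 := by
    rw [← Matrix.det_mul, ← Units.val_mul, inv_mul_cancel, Units.val_one, Matrix.det_one]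
  exact eq_inv_of_mul_eq_one_left h

/-- limit argument : a polynomial that equals `t^m * K` for all `t ≠ 0` with `m<0` forces `K = 0` -/
lemma key_limit (p : Polynomial ℂ) (K : ℂ) (m : ℤ) (hm : m < 0)
    (h : ∀ t : ℂˣ, p.eval (t : ℂ) = (t : ℂ) ^ m * K) : K = 0 := by
  set q : Polynomial ℂ := p * Polynomial.X ^ (-m).toNat - Polynomial.C K with hq
  have hq0 : q = 0 := by
    apply Polynomial.eq_zero_of_infinite_isRoot
    apply Set.Infinite.mono (s := {x : ℂ | x ≠ 0})
    · intro x hx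
      have hxu : x ≠ 0 := hx
      have := h (Units.mk0 x hxu)
      simp only [Units.val_mk0] at this
      have hxm : x ^ ((-m).toNat) = x ^ (-m : ℤ) := by
        rw [← zpow_natCast, Int.toNat_of_nonneg (by omega)]
      simp only [Set.mem_setOf_eq, Polynomial.IsRoot, hq, Polynomial.eval_sub,
        Polynomial.eval_mul, Polynomial.eval_pow, Polynomial.eval_X, Polynomial.eval_C, this, hxm]
      rw [mul_assoc, mul_comm K, ← mul_assoc, ← zpow_add₀ hxu]
      simp
    · have h1 : ({0} : Set ℂ)ᶜ.Infinite := (Set.finite_singleton 0).infinite_compl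
      have h2 : ({0} : Set ℂ)ᶜ = {x : ℂ | x ≠ 0} := by ext x; simp
      rwa [h2] at h1
  have h0 := congrArg (Polynomial.eval 0) hq0
  rw [hq] at h0
  simp only [Polynomial.eval_sub, Polynomial.eval_mul, Polynomial.eval_pow,
    Polynomial.eval_X, Polynomial.eval_C, Polynomial.eval_zero,
    zero_pow (show (-m).toNat ≠ 0 by omega), mul_zero, zero_sub, neg_eq_zero] at h0
  exact h0
def sqEnv {n₁ n₂ n₃ n₄ : ℕ}
    (v₁ : Matrix (Fin n₂) (Fin n₁) ℂ) (v₂ : Matrix (Fin n₃) (Fin n₁) ℂ)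
    (v₃ : Matrix (Fin n₄) (Fin n₂) ℂ) (v₄ : Matrix (Fin n₄) (Fin n₃) ℂ) :
    SqVars n₁ n₂ n₃ n₄ → ℂ :=
  Sum.elim (fun p => v₁ p.1 p.2) <| Sum.elim (fun p => v₂ p.1 p.2) <|
      Sum.elim (fun p => v₃ p.1 p.2) (fun p => v₄ p.1 p.2)

lemma sqEval_def {n₁ n₂ n₃ n₄ : ℕ} (f : MvPolynomial (SqVars n₁ n₂ n₃ n₄) ℂ)
    (v₁ : Matrix (Fin n₂) (Fin n₁) ℂ) (v₂ : Matrix (Fin n₃) (Fin n₁) ℂ)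
    (v₃ : Matrix (Fin n₄) (Fin n₂) ℂ) (v₄ : Matrix (Fin n₄) (Fin n₃) ℂ) :
    sqEval f v₁ v₂ v₃ v₄ = MvPolynomial.eval (sqEnv v₁ v₂ v₃ v₄) f := rfl

lemma sqEnv_of {n₁ n₂ n₃ n₄ : ℕ} (x : SqVars n₁ n₂ n₃ n₄ → ℂ) :
    sqEnv (Matrix.of fun p q => x (.inl (p,q)))
      (Matrix.of fun p q => x (.inr (.inl (p,q))))
      (Matrix.of fun p q => x (.inr (.inr (.inl (p,q)))))
      (Matrix.of fun p q => x (.inr (.inr (.inr (p,q))))) = x := by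
  funext s
  rcases s with ⟨p,q⟩|⟨p,q⟩|⟨p,q⟩|⟨p,q⟩ <;> rfl

lemma eval_all_zero {n₁ n₂ n₃ n₄ : ℕ} (f : MvPolynomial (SqVars n₁ n₂ n₃ n₄) ℂ)
    (h : ∀ v₁ v₂ v₃ v₄, sqEval f v₁ v₂ v₃ v₄ = 0) : f = 0 := by
  apply MvPolynomial.funext
  intro x
  rw [map_zero]
  have := h (Matrix.of fun p q => x (.inl (p,q)))
      (Matrix.of fun p q => x (.inr (.inl (p,q))))
      (Matrix.of fun p q => x (.inr (.inr (.inl (p,q)))))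
      (Matrix.of fun p q => x (.inr (.inr (.inr (p,q)))))
  rwa [sqEval_def, sqEnv_of] at this

lemma exists_eval_ne {n₁ n₂ n₃ n₄ : ℕ} (f : MvPolynomial (SqVars n₁ n₂ n₃ n₄) ℂ)
    (hf : f ≠ 0) : ∃ v₁ v₂ v₃ v₄, sqEval f v₁ v₂ v₃ v₄ ≠ 0 := by
  by_contra h
  push_neg at h
  exact hf (eval_all_zero f fun v₁ v₂ v₃ v₄ => h v₁ v₂ v₃ v₄)

/-! ### variable matrices -/

def Xm1 (n₁ n₂ n₃ n₄ : ℕ) : Matrix (Fin n₂) (Fin n₁) (MvPolynomial (SqVars n₁ n₂ n₃ n₄) ℂ) :=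
  Matrix.of fun p q => X (Sum.inl (p,q))
def Xm2 (n₁ n₂ n₃ n₄ : ℕ) : Matrix (Fin n₃) (Fin n₁) (MvPolynomial (SqVars n₁ n₂ n₃ n₄) ℂ) :=
  Matrix.of fun p q => X (Sum.inr (Sum.inl (p,q)))
def Xm3 (n₁ n₂ n₃ n₄ : ℕ) : Matrix (Fin n₄) (Fin n₂) (MvPolynomial (SqVars n₁ n₂ n₃ n₄) ℂ) :=
  Matrix.of fun p q => X (Sum.inr (Sum.inr (Sum.inl (p,q))))
def Xm4 (n₁ n₂ n₃ n₄ : ℕ) : Matrix (Fin n₄) (Fin n₃) (MvPolynomial (SqVars n₁ n₂ n₃ n₄) ℂ) :=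
  Matrix.of fun p q => X (Sum.inr (Sum.inr (Sum.inr (p,q))))

variable {n₁ n₂ n₃ n₄ : ℕ} {v₁ : Matrix (Fin n₂) (Fin n₁) ℂ} {v₂ : Matrix (Fin n₃) (Fin n₁) ℂ}
    {v₃ : Matrix (Fin n₄) (Fin n₂) ℂ} {v₄ : Matrix (Fin n₄) (Fin n₃) ℂ}

@[simp] lemma map_Xm1 : (Xm1 n₁ n₂ n₃ n₄).map (MvPolynomial.eval (sqEnv v₁ v₂ v₃ v₄)) = v₁ := by
  ext p q; simp [Xm1, sqEnv]
@[simp] lemma map_Xm2 : (Xm2 n₁ n₂ n₃ n₄).map (MvPolynomial.eval (sqEnv v₁ v₂ v₃ v₄)) = v₂ := by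
  ext p q; simp [Xm2, sqEnv]
@[simp] lemma map_Xm3 : (Xm3 n₁ n₂ n₃ n₄).map (MvPolynomial.eval (sqEnv v₁ v₂ v₃ v₄)) = v₃ := by
  ext p q; simp [Xm3, sqEnv]
@[simp] lemma map_Xm4 : (Xm4 n₁ n₂ n₃ n₄).map (MvPolynomial.eval (sqEnv v₁ v₂ v₃ v₄)) = v₄ := by
  ext p q; simp [Xm4, sqEnv]

lemma sqEval_det1 {n : ℕ}
    (v₁ : Matrix (Fin n) (Fin n) ℂ) (v₂ : Matrix (Fin (n+1)) (Fin n) ℂ)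
    (v₃ : Matrix (Fin (n+1)) (Fin n) ℂ) (v₄ : Matrix (Fin (n+1)) (Fin (n+1)) ℂ) :
    sqEval (Xm1 n n (n+1) (n+1)).det v₁ v₂ v₃ v₄ = v₁.det := by
  rw [sqEval_def, RingHom.map_det]
  congr 1
  rw [RingHom.mapMatrix_apply]
  exact map_Xm1

lemma sqEval_det4 {n : ℕ}
    (v₁ : Matrix (Fin n) (Fin n) ℂ) (v₂ : Matrix (Fin (n+1)) (Fin n) ℂ)
    (v₃ : Matrix (Fin (n+1)) (Fin n) ℂ) (v₄ : Matrix (Fin (n+1)) (Fin (n+1)) ℂ) :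
    sqEval (Xm4 n n (n+1) (n+1)).det v₁ v₂ v₃ v₄ = v₄.det := by
  rw [sqEval_def, RingHom.map_det]
  congr 1
  rw [RingHom.mapMatrix_apply]
  exact map_Xm4


/-- the big block matrix whose determinant is the third basic semi-invariant -/
def psiM {R : Type*} [CommRing R] {n : ℕ}
    (w₁ : Matrix (Fin n) (Fin n) R) (w₂ : Matrix (Fin (n+1)) (Fin n) R)
    (w₃ : Matrix (Fin (n+1)) (Fin n) R) (w₄ : Matrix (Fin (n+1)) (Fin (n+1)) R) :
    Matrix (Fin (n+1) × Fin n) (Fin n × Fin (n+1)) R :=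
  Matrix.of fun rp cp =>
    (if cp.2 = Fin.castSucc rp.2 then (if (rp.2 : ℕ) = 0 then w₃ else w₃ * w₁) rp.1 cp.1 else 0)
    + (if cp.2 = Fin.succ rp.2 then (w₄ * w₂) rp.1 cp.1 else 0)

lemma psiM_map {R S : Type*} [CommRing R] [CommRing S] (φ : R →+* S) {n : ℕ}
    (w₁ : Matrix (Fin n) (Fin n) R) (w₂ : Matrix (Fin (n+1)) (Fin n) R)
    (w₃ : Matrix (Fin (n+1)) (Fin n) R) (w₄ : Matrix (Fin (n+1)) (Fin (n+1)) R) :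
    (psiM w₁ w₂ w₃ w₄).map φ = psiM (w₁.map φ) (w₂.map φ) (w₃.map φ) (w₄.map φ) := by
  ext ⟨r, i⟩ ⟨c, j⟩
  simp only [psiM, Matrix.map_apply, Matrix.of_apply, map_add, apply_ite φ, map_zero]
  congr 2
  · by_cases h : (i : ℕ) = 0 <;> simp [h, RingHom.map_matrix_mul]
  · rw [RingHom.map_matrix_mul]

lemma triple_mul_apply {a b c d : Type*} [Fintype b] [Fintype c]
    (A : Matrix a b ℂ) (B : Matrix b c ℂ) (C : Matrix c d ℂ) (r : a) (z : d) :
    (A * B * C) r z = ∑ r' : b, ∑ c' : c, A r r' * B r' c' * C c' z := by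
  rw [Matrix.mul_apply]
  simp only [Matrix.mul_apply, Finset.sum_mul]
  rw [Finset.sum_comm]

lemma bd_mul_mul {n : ℕ} (P : Fin n → Matrix (Fin (n+1)) (Fin (n+1)) ℂ)
    (M : Matrix (Fin (n+1) × Fin n) (Fin n × Fin (n+1)) ℂ)
    (Q : Fin (n+1) → Matrix (Fin n) (Fin n) ℂ) (r : Fin (n+1)) (i : Fin n)
    (c : Fin n) (j : Fin (n+1)) :
    (Matrix.blockDiagonal P * M * Matrix.blockDiagonal Q) (r, i) (c, j)
      = ∑ r' : Fin (n+1), ∑ c' : Fin n, P i r r' * M (r', i) (c', j) * Q j c' c := by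
  rw [triple_mul_apply]
  simp only [Fintype.sum_prod_type, Matrix.blockDiagonal_apply, ite_mul, zero_mul, mul_ite,
    mul_zero, Finset.sum_ite_eq, Finset.sum_ite_eq', Finset.mem_univ, if_true]
  refine Finset.sum_congr rfl fun x _ => ?_
  rw [Finset.sum_comm]
  simp [Finset.sum_ite_eq]

lemma cancel_mid {a b m c d : ℕ} (g : (Matrix (Fin m) (Fin m) ℂ)ˣ)
    (A : Matrix (Fin a) (Fin b) ℂ) (B : Matrix (Fin b) (Fin m) ℂ)
    (C : Matrix (Fin m) (Fin c) ℂ) (D : Matrix (Fin c) (Fin d) ℂ) :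
    (A * B * (g⁻¹ : (Matrix (Fin m) (Fin m) ℂ)ˣ).val) * ((g : Matrix (Fin m) (Fin m) ℂ) * C * D)
      = A * (B * C) * D := by
  have h : ((g⁻¹ : (Matrix (Fin m) (Fin m) ℂ)ˣ).val) * (g : Matrix (Fin m) (Fin m) ℂ) = 1 := by
    rw [← Units.val_mul, inv_mul_cancel, Units.val_one]
  calc (A * B * (g⁻¹ : (Matrix (Fin m) (Fin m) ℂ)ˣ).val) * ((g : Matrix (Fin m) (Fin m) ℂ) * C * D)
      = A * B * (((g⁻¹ : (Matrix (Fin m) (Fin m) ℂ)ˣ).val) * (g : Matrix (Fin m) (Fin m) ℂ)) * C * D := by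
        simp only [Matrix.mul_assoc]
    _ = A * (B * C) * D := by rw [h, Matrix.mul_one, Matrix.mul_assoc A]

lemma psiM_transform {n : ℕ} (g₁ g₂ : (Matrix (Fin n) (Fin n) ℂ)ˣ)
    (g₃ g₄ : (Matrix (Fin (n+1)) (Fin (n+1)) ℂ)ˣ)
    (v₁ : Matrix (Fin n) (Fin n) ℂ) (v₂ : Matrix (Fin (n+1)) (Fin n) ℂ)
    (v₃ : Matrix (Fin (n+1)) (Fin n) ℂ) (v₄ : Matrix (Fin (n+1)) (Fin (n+1)) ℂ) :
    psiM ((g₂ : Matrix (Fin n) (Fin n) ℂ) * v₁ * (g₁⁻¹ : (Matrix (Fin n) (Fin n) ℂ)ˣ).val)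
      ((g₃ : Matrix (Fin (n+1)) (Fin (n+1)) ℂ) * v₂ * (g₁⁻¹ : (Matrix (Fin n) (Fin n) ℂ)ˣ).val)
      ((g₄ : Matrix (Fin (n+1)) (Fin (n+1)) ℂ) * v₃ * (g₂⁻¹ : (Matrix (Fin n) (Fin n) ℂ)ˣ).val)
      ((g₄ : Matrix (Fin (n+1)) (Fin (n+1)) ℂ) * v₄ * (g₃⁻¹ : (Matrix (Fin (n+1)) (Fin (n+1)) ℂ)ˣ).val)
      = Matrix.blockDiagonal (fun _ : Fin n => (g₄ : Matrix (Fin (n+1)) (Fin (n+1)) ℂ))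
        * psiM v₁ v₂ v₃ v₄
        * Matrix.blockDiagonal (fun j : Fin (n+1) =>
            if (j : ℕ) = 0 then (g₂⁻¹ : (Matrix (Fin n) (Fin n) ℂ)ˣ).val
            else (g₁⁻¹ : (Matrix (Fin n) (Fin n) ℂ)ˣ).val) := by
  ext ⟨r, i⟩ ⟨c, j⟩
  rw [bd_mul_mul]
  have hne : Fin.castSucc i ≠ Fin.succ i := by
    intro h; have := congrArg (fun z : Fin (n+1) => (z : ℕ)) h; simp at this
  by_cases h1 : j = Fin.castSucc i <;> by_cases h2 : j = Fin.succ i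
  · exact absurd (h1 ▸ h2) hne
  · -- j = castSucc i
    simp only [psiM, Matrix.of_apply, h1, if_true, Fin.coe_castSucc, if_neg hne, add_zero]
    by_cases hi : (i : ℕ) = 0
    · simp only [hi, if_true]
      exact triple_mul_apply (g₄ : Matrix (Fin (n+1)) (Fin (n+1)) ℂ) v₃
        (g₂⁻¹ : (Matrix (Fin n) (Fin n) ℂ)ˣ).val r c
    · simp only [hi, if_false]
      rw [cancel_mid g₂ (g₄ : Matrix (Fin (n+1)) (Fin (n+1)) ℂ) v₃ v₁
        (g₁⁻¹ : (Matrix (Fin n) (Fin n) ℂ)ˣ).val]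
      exact triple_mul_apply _ _ _ r c
  · -- j = succ i
    have hne' : Fin.succ i ≠ Fin.castSucc i := fun h => hne h.symm
    simp only [psiM, Matrix.of_apply, h2, if_true, Fin.val_succ, if_neg hne', zero_add,
      if_neg (Nat.succ_ne_zero (i : ℕ))]
    rw [cancel_mid g₃ (g₄ : Matrix (Fin (n+1)) (Fin (n+1)) ℂ) v₄ v₂
      (g₁⁻¹ : (Matrix (Fin n) (Fin n) ℂ)ˣ).val]
    exact triple_mul_apply _ _ _ r c
  · simp [psiM, h1, h2]


/-! ### square form of psi, its determinant and transformation -/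

def psiS {R : Type*} [CommRing R] {n : ℕ}
    (w₁ : Matrix (Fin n) (Fin n) R) (w₂ : Matrix (Fin (n+1)) (Fin n) R)
    (w₃ : Matrix (Fin (n+1)) (Fin n) R) (w₄ : Matrix (Fin (n+1)) (Fin (n+1)) R) :
    Matrix (Fin (n+1) × Fin n) (Fin (n+1) × Fin n) R :=
  (psiM w₁ w₂ w₃ w₄).submatrix id ⇑(Equiv.prodComm (Fin (n+1)) (Fin n))

lemma psiS_map {R S : Type*} [CommRing R] [CommRing S] (φ : R →+* S) {n : ℕ}
    (w₁ : Matrix (Fin n) (Fin n) R) (w₂ : Matrix (Fin (n+1)) (Fin n) R)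
    (w₃ : Matrix (Fin (n+1)) (Fin n) R) (w₄ : Matrix (Fin (n+1)) (Fin (n+1)) R) :
    (psiS w₁ w₂ w₃ w₄).map φ = psiS (w₁.map φ) (w₂.map φ) (w₃.map φ) (w₄.map φ) := by
  unfold psiS
  rw [← psiM_map φ]
  rfl

lemma psiS_det_transform {n : ℕ} (g₁ g₂ : (Matrix (Fin n) (Fin n) ℂ)ˣ)
    (g₃ g₄ : (Matrix (Fin (n+1)) (Fin (n+1)) ℂ)ˣ)
    (v₁ : Matrix (Fin n) (Fin n) ℂ) (v₂ : Matrix (Fin (n+1)) (Fin n) ℂ)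
    (v₃ : Matrix (Fin (n+1)) (Fin n) ℂ) (v₄ : Matrix (Fin (n+1)) (Fin (n+1)) ℂ) :
    (psiS ((g₂ : Matrix (Fin n) (Fin n) ℂ) * v₁ * (g₁⁻¹ : (Matrix (Fin n) (Fin n) ℂ)ˣ).val)
      ((g₃ : Matrix (Fin (n+1)) (Fin (n+1)) ℂ) * v₂ * (g₁⁻¹ : (Matrix (Fin n) (Fin n) ℂ)ˣ).val)
      ((g₄ : Matrix (Fin (n+1)) (Fin (n+1)) ℂ) * v₃ * (g₂⁻¹ : (Matrix (Fin n) (Fin n) ℂ)ˣ).val)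
      ((g₄ : Matrix (Fin (n+1)) (Fin (n+1)) ℂ) * v₄ * (g₃⁻¹ : (Matrix (Fin (n+1)) (Fin (n+1)) ℂ)ˣ).val)).det
      = ((g₄ : Matrix (Fin (n+1)) (Fin (n+1)) ℂ).det) ^ n
          * (psiS v₁ v₂ v₃ v₄).det
          * (((g₂⁻¹ : (Matrix (Fin n) (Fin n) ℂ)ˣ).val).det
              * (((g₁⁻¹ : (Matrix (Fin n) (Fin n) ℂ)ˣ).val).det) ^ n) := by
  set sw := Equiv.prodComm (Fin (n+1)) (Fin n) with hsw
  set P := Matrix.blockDiagonal (fun _ : Fin n => (g₄ : Matrix (Fin (n+1)) (Fin (n+1)) ℂ)) with hP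
  set Q := Matrix.blockDiagonal (fun j : Fin (n+1) =>
      if (j : ℕ) = 0 then (g₂⁻¹ : (Matrix (Fin n) (Fin n) ℂ)ˣ).val
      else (g₁⁻¹ : (Matrix (Fin n) (Fin n) ℂ)ˣ).val) with hQ
  have h1 : psiS ((g₂ : Matrix (Fin n) (Fin n) ℂ) * v₁ * (g₁⁻¹ : (Matrix (Fin n) (Fin n) ℂ)ˣ).val)
      ((g₃ : Matrix (Fin (n+1)) (Fin (n+1)) ℂ) * v₂ * (g₁⁻¹ : (Matrix (Fin n) (Fin n) ℂ)ˣ).val)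
      ((g₄ : Matrix (Fin (n+1)) (Fin (n+1)) ℂ) * v₃ * (g₂⁻¹ : (Matrix (Fin n) (Fin n) ℂ)ˣ).val)
      ((g₄ : Matrix (Fin (n+1)) (Fin (n+1)) ℂ) * v₄ * (g₃⁻¹ : (Matrix (Fin (n+1)) (Fin (n+1)) ℂ)ˣ).val)
      = P * psiS v₁ v₂ v₃ v₄ * Q.submatrix ⇑sw ⇑sw := by
    unfold psiS
    rw [psiM_transform]
    rw [← Matrix.submatrix_mul_equiv (P * psiM v₁ v₂ v₃ v₄) Q id sw ⇑sw]
    congr 1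
  rw [h1, Matrix.det_mul, Matrix.det_mul, Matrix.det_submatrix_equiv_self]
  have hdP : P.det = ((g₄ : Matrix (Fin (n+1)) (Fin (n+1)) ℂ).det) ^ n := by
    rw [hP, Matrix.det_blockDiagonal]
    simp
  have hdQ : Q.det = ((g₂⁻¹ : (Matrix (Fin n) (Fin n) ℂ)ˣ).val).det
      * (((g₁⁻¹ : (Matrix (Fin n) (Fin n) ℂ)ˣ).val).det) ^ n := by
    rw [hQ, Matrix.det_blockDiagonal, Fin.prod_univ_succ]
    simp
  rw [hdP, hdQ]

lemma sqEval_psiS_det {n : ℕ}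
    (v₁ : Matrix (Fin n) (Fin n) ℂ) (v₂ : Matrix (Fin (n+1)) (Fin n) ℂ)
    (v₃ : Matrix (Fin (n+1)) (Fin n) ℂ) (v₄ : Matrix (Fin (n+1)) (Fin (n+1)) ℂ) :
    sqEval (psiS (Xm1 n n (n+1) (n+1)) (Xm2 n n (n+1) (n+1)) (Xm3 n n (n+1) (n+1))
        (Xm4 n n (n+1) (n+1))).det v₁ v₂ v₃ v₄ = (psiS v₁ v₂ v₃ v₄).det := by
  rw [sqEval_def, RingHom.map_det]
  congr 1
  rw [RingHom.mapMatrix_apply, psiS_map]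
  rw [map_Xm1, map_Xm2, map_Xm3, map_Xm4]

/-! ### the special point -/

def Kmat (n : ℕ) : Matrix (Fin (n+1)) (Fin n) ℂ :=
  Matrix.of fun r c => if (r : ℕ) = (c : ℕ) then 1 else 0

def Jmat (n : ℕ) : Matrix (Fin (n+1)) (Fin n) ℂ :=
  Matrix.of fun r c => if (r : ℕ) = (c : ℕ) + 1 then 1 else 0

lemma sumK {n : ℕ} (r : Fin (n+1)) (φ : Fin n → ℂ) :
    ∑ c, Kmat n r c * φ c = if h : (r : ℕ) < n then φ ⟨r, h⟩ else 0 := by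
  by_cases h : (r : ℕ) < n
  · rw [dif_pos h, Finset.sum_eq_single ⟨(r : ℕ), h⟩]
    · simp [Kmat]
    · intro b _ hb
      have : (r : ℕ) ≠ (b : ℕ) := fun hrb => hb (by simp [Fin.ext_iff, ← hrb])
      simp [Kmat, this]
    · simp
  · rw [dif_neg h]
    apply Finset.sum_eq_zero
    intro c _
    have : (r : ℕ) ≠ (c : ℕ) := by omega
    simp [Kmat, this]

lemma sumJ {n : ℕ} (r : Fin (n+1)) (φ : Fin n → ℂ) :
    ∑ c, Jmat n r c * φ c
      = if h : 1 ≤ (r : ℕ) ∧ (r : ℕ) - 1 < n then φ ⟨(r : ℕ) - 1, h.2⟩ else 0 := by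
  by_cases h : 1 ≤ (r : ℕ) ∧ (r : ℕ) - 1 < n
  · rw [dif_pos h, Finset.sum_eq_single ⟨(r : ℕ) - 1, h.2⟩]
    · have h2 : (r : ℕ) = ((r : ℕ) - 1) + 1 := by omega
      simp only [Jmat, Matrix.of_apply]
      rw [if_pos]
      · rw [one_mul]
      · exact h2
    · intro b _ hb
      have : (r : ℕ) ≠ (b : ℕ) + 1 := by
        intro hrb
        apply hb
        have : (b : ℕ) = (r : ℕ) - 1 := by omega
        simp [Fin.ext_iff, this]
      simp [Jmat, this]
    · simp
  · rw [dif_neg h]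
    apply Finset.sum_eq_zero
    intro c _
    have hr : (r : ℕ) ≤ n := by omega
    have : (r : ℕ) ≠ (c : ℕ) + 1 := by omega
    simp [Jmat, this]

lemma psiS_special_det_ne (n : ℕ) (hn : 1 ≤ n) :
    (psiS (1 : Matrix (Fin n) (Fin n) ℂ) (Kmat n) (Jmat n) 1).det ≠ 0 := by
  intro hdet
  obtain ⟨x, hx0, hx⟩ := Matrix.exists_mulVec_eq_zero_iff.mpr hdet
  apply hx0
  set u : ℕ → ℕ → ℂ := fun j c => if h : j < n + 1 ∧ c < n then x (⟨j, h.1⟩, ⟨c, h.2⟩) else 0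
    with hu
  have u_eq : ∀ (J : Fin (n+1)) (c : Fin n), u (J : ℕ) (c : ℕ) = x (J, c) := by
    intro J c
    rw [hu]
    simp only []
    rw [dif_pos ⟨J.isLt, c.isLt⟩]
  -- row equations
  have key : ∀ (i' r' : ℕ), i' < n → r' ≤ n →
      (if 1 ≤ r' then u i' (r' - 1) else 0) + u (i' + 1) r' = 0 := by
    intro i' r' hi hr
    set i : Fin n := ⟨i', hi⟩
    set r : Fin (n+1) := ⟨r', by omega⟩
    have hrv : (r : ℕ) = r' := rfl
    have hiv : (i : ℕ) = i' := rfl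
    have h0 := congrFun hx (r, i)
    rw [Matrix.mulVec, dotProduct] at h0
    rw [Fintype.sum_prod_type] at h0
    have hexp : ∀ (a : Fin (n+1)) (b : Fin n),
        psiS (1 : Matrix (Fin n) (Fin n) ℂ) (Kmat n) (Jmat n) 1 (r, i) (a, b)
          = (if a = Fin.castSucc i then Jmat n r b else 0)
            + (if a = Fin.succ i then Kmat n r b else 0) := by
      intro a b
      simp only [psiS, psiM, Matrix.submatrix_apply, Equiv.prodComm_apply, Prod.swap,
        Matrix.of_apply, Matrix.mul_one, Matrix.one_mul, id]
      congr 1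
      by_cases h : (i : ℕ) = 0 <;> simp [h, Matrix.mul_one]
    simp only [hexp, add_mul, ite_mul, zero_mul, Finset.sum_add_distrib, Pi.zero_apply] at h0
    have collapse : ∀ (a : Fin (n+1)) (F : Fin (n+1) → Fin n → ℂ),
        (∑ j : Fin (n+1), ∑ c : Fin n, if j = a then F j c else 0) = ∑ c : Fin n, F a c := by
      intro a F
      rw [Finset.sum_comm]
      refine (Finset.sum_congr rfl fun c _ => ?_).trans rfl
      simp [Finset.sum_ite_eq']
    rw [collapse (Fin.castSucc i) (fun j c => Jmat n r c * x (j, c)),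
      collapse (Fin.succ i) (fun j c => Kmat n r c * x (j, c)),
      sumJ r (fun c => x (Fin.castSucc i, c)), sumK r (fun c => x (Fin.succ i, c))] at h0
    have e1 : (if h : 1 ≤ (r : ℕ) ∧ (r : ℕ) - 1 < n then x (Fin.castSucc i, ⟨(r : ℕ) - 1, h.2⟩) else 0)
        = (if 1 ≤ r' then u i' (r' - 1) else 0) := by
      by_cases h : 1 ≤ r'
      · have hcond : 1 ≤ (r : ℕ) ∧ (r : ℕ) - 1 < n := by
          rw [hrv]; constructor <;> omega
        rw [dif_pos hcond, if_pos h]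
        have := u_eq (Fin.castSucc i) ⟨(r : ℕ) - 1, hcond.2⟩
        simp only [Fin.coe_castSucc, hrv, hiv] at this ⊢
        rw [← this]
      · have hcond : ¬(1 ≤ (r : ℕ) ∧ (r : ℕ) - 1 < n) := by rw [hrv]; omega
        rw [if_neg h, dif_neg hcond]
    have e2 : (if h : (r : ℕ) < n then x (Fin.succ i, ⟨(r : ℕ), h⟩) else 0) = u (i' + 1) r' := by
      by_cases h : r' < n
      · rw [dif_pos (show (r : ℕ) < n from hrv ▸ h)]
        have := u_eq (Fin.succ i) ⟨(r : ℕ), hrv ▸ h⟩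
        simp only [Fin.val_succ, hrv, hiv] at this ⊢
        rw [← this]
      · rw [dif_neg (show ¬ (r : ℕ) < n from hrv ▸ h)]
        have hcond : ¬((i' + 1 < n + 1) ∧ (r' < n)) := by omega
        simp only [hu]
        rw [dif_neg hcond]
    rw [e1, e2] at h0
    exact h0
  -- the chase
  have R1 : ∀ i' : ℕ, i' < n → u (i' + 1) 0 = 0 := by
    intro i' hi
    have := key i' 0 hi (by omega)
    simpa using this
  have R2 : ∀ i' c' : ℕ, i' < n → c' < n → u i' c' + u (i' + 1) (c' + 1) = 0 := by
    intro i' c' hi hc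
    have := key i' (c' + 1) hi (by omega)
    simpa using this
  have R3 : ∀ i' : ℕ, i' < n → u i' (n - 1) = 0 := by
    intro i' hi
    have := R2 i' (n - 1) hi (by omega)
    have hcond : ¬((i' + 1 < n + 1) ∧ ((n - 1) + 1 < n)) := by omega
    have h2 : u (i' + 1) ((n - 1) + 1) = 0 := by
      simp only [hu]; exact dif_neg hcond
    rw [h2, add_zero] at this
    exact this
  have L : ∀ j : ℕ, j ≤ n → ∀ c : ℕ, c < n →
      u j c = if j ≤ c then (-1 : ℂ) ^ j * u 0 (c - j) else 0 := by
    intro j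
    induction j with
    | zero => intro _ c _; simp
    | succ j ih =>
      intro hj c hc
      match c with
      | 0 =>
        rw [R1 j (by omega)]
        rw [if_neg (by omega)]
      | Nat.succ c' =>
        have hrel := R2 j c' (by omega) (by omega)
        have : u (j + 1) (c' + 1) = -u j c' := eq_neg_of_add_eq_zero_right hrel
        rw [this, ih (by omega) c' (by omega)]
        by_cases hjc : j ≤ c'
        · rw [if_pos hjc, if_pos (by omega)]
          have : c' + 1 - (j + 1) = c' - j := by omega
          rw [this, pow_succ]
          ring
        · rw [if_neg hjc, if_neg (by omega), neg_zero]
  have z0 : ∀ c : ℕ, c < n → u 0 c = 0 := by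
    intro c hc
    have h1 := L (n - 1 - c) (by omega) (n - 1) (by omega)
    rw [if_pos (by omega)] at h1
    have h2 := R3 (n - 1 - c) (by omega)
    rw [h1] at h2
    have h3 : (n - 1) - (n - 1 - c) = c := by omega
    rw [h3] at h2
    rcases mul_eq_zero.mp h2 with h | h
    · exact absurd h (pow_ne_zero _ (by norm_num : (-1:ℂ) ≠ 0))
    · exact h
  funext a
  obtain ⟨J, c⟩ := a
  have h1 : x (J, c) = u (J : ℕ) (c : ℕ) := (u_eq J c).symm
  have h2 := L (J : ℕ) (by omega) (c : ℕ) c.isLt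
  rw [h2] at h1
  rw [h1]
  by_cases hjc : (J : ℕ) ≤ (c : ℕ)
  · rw [if_pos hjc, z0 _ (by omega), mul_zero]
    rfl
  · rw [if_neg hjc]
    rfl

/-! ### sufficiency -/

lemma sq_sufficiency (n : ℕ) (hn : 1 ≤ n) (σ₁ σ₂ σ₃ σ₄ : ℤ)
    (h12 : 0 ≤ σ₁ + σ₂) (h134 : 0 ≤ σ₁ + σ₃ + σ₄) (h3 : 0 ≤ σ₃)
    (hsum : (n : ℤ) * σ₁ + (n : ℤ) * σ₂ + ((n : ℤ) + 1) * σ₃ + ((n : ℤ) + 1) * σ₄ = 0) :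
    ∃ f : MvPolynomial (SqVars n n (n + 1) (n + 1)) ℂ,
      f ≠ 0 ∧ IsSqSemiInvariant σ₁ σ₂ σ₃ σ₄ f := by
  have hdvd : ((n : ℤ) + 1) ∣ (σ₁ + σ₂) := by
    have h1 : ((n : ℤ) + 1) ∣ (n : ℤ) * (σ₁ + σ₂) := ⟨-(σ₃ + σ₄), by linarith⟩
    have hcop : IsCoprime ((n : ℤ) + 1) (n : ℤ) := ⟨1, -1, by ring⟩
    exact hcop.dvd_of_dvd_mul_left h1
  obtain ⟨c, hc⟩ := hdvd
  have hc0 : 0 ≤ c := by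
    by_contra h
    push_neg at h
    have : ((n : ℤ) + 1) * c < 0 := mul_neg_of_pos_of_neg (by positivity) h
    omega
  have h34 : σ₃ + σ₄ = -(n : ℤ) * c := by
    have hz : ((n : ℤ) + 1) * (σ₃ + σ₄ + (n : ℤ) * c) = 0 := by linear_combination hsum - (n : ℤ) * hc
    rcases mul_eq_zero.mp hz with h | h
    · exfalso; omega
    · linarith
  set a := σ₃.toNat with hadef
  set b := (σ₁ + σ₃ + σ₄).toNat with hbdef
  set cn := c.toNat with hcndef
  have ha : (a : ℤ) = σ₃ := Int.toNat_of_nonneg h3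
  have hb : (b : ℤ) = σ₁ + σ₃ + σ₄ := Int.toNat_of_nonneg h134
  have hcn : (cn : ℤ) = c := Int.toNat_of_nonneg hc0
  set F : MvPolynomial (SqVars n n (n + 1) (n + 1)) ℂ :=
    (Xm4 n n (n+1) (n+1)).det ^ a * (Xm1 n n (n+1) (n+1)).det ^ b
      * (psiS (Xm1 n n (n+1) (n+1)) (Xm2 n n (n+1) (n+1)) (Xm3 n n (n+1) (n+1))
          (Xm4 n n (n+1) (n+1))).det ^ cn with hF
  have expand : ∀ (w₁ : Matrix (Fin n) (Fin n) ℂ) (w₂ : Matrix (Fin (n+1)) (Fin n) ℂ)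
      (w₃ : Matrix (Fin (n+1)) (Fin n) ℂ) (w₄ : Matrix (Fin (n+1)) (Fin (n+1)) ℂ),
      sqEval F w₁ w₂ w₃ w₄
        = (w₄.det) ^ a * (w₁.det) ^ b * ((psiS w₁ w₂ w₃ w₄).det) ^ cn := by
    intro w₁ w₂ w₃ w₄
    rw [hF, sqEval_def, _root_.map_mul, _root_.map_mul, map_pow, map_pow, map_pow,
      ← sqEval_def, ← sqEval_def, ← sqEval_def, sqEval_det1, sqEval_det4, sqEval_psiS_det]
  refine ⟨F, ?_, ?_⟩
  · intro h0
    have he := expand 1 (Kmat n) (Jmat n) 1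
    rw [h0] at he
    rw [sqEval_def, map_zero] at he
    rw [Matrix.det_one, Matrix.det_one, one_pow, one_pow, one_mul, one_mul] at he
    exact pow_ne_zero cn (psiS_special_det_ne n hn) he.symm
  · intro g₁ g₂ g₃ g₄ v₁ v₂ v₃ v₄
    simp only [← Matrix.coe_units_inv]
    rw [expand, expand]
    rw [psiS_det_transform g₁ g₂ g₃ g₄ v₁ v₂ v₃ v₄]
    simp only [Matrix.det_mul]
    rw [det_unit_inv g₁, det_unit_inv g₂, det_unit_inv g₃]
    set D1 := ((g₁ : Matrix (Fin n) (Fin n) ℂ)).det with hD1def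
    set D2 := ((g₂ : Matrix (Fin n) (Fin n) ℂ)).det with hD2def
    set D3 := ((g₃ : Matrix (Fin (n+1)) (Fin (n+1)) ℂ)).det with hD3def
    set D4 := ((g₄ : Matrix (Fin (n+1)) (Fin (n+1)) ℂ)).det with hD4def
    have hD1 : D1 ≠ 0 := det_unit_ne_zero g₁
    have hD2 : D2 ≠ 0 := det_unit_ne_zero g₂
    have hD3 : D3 ≠ 0 := det_unit_ne_zero g₃
    have hD4 : D4 ≠ 0 := det_unit_ne_zero g₄
    have hnc : (n : ℤ) * (cn : ℤ) = (n : ℤ) * c := by rw [hcn]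
    have e1 : D1 ^ (-σ₁) = (D1 ^ (b + n * cn))⁻¹ := by
      rw [show -σ₁ = -((b + n * cn : ℕ) : ℤ) by push_cast; linarith]
      rw [_root_.zpow_neg, zpow_natCast]
    have e2 : D2 ^ (-σ₂) = D2 ^ b * (D2 ^ cn)⁻¹ := by
      rw [show -σ₂ = ((b : ℕ) : ℤ) - ((cn : ℕ) : ℤ) by push_cast; linarith]
      rw [zpow_sub₀ hD2, zpow_natCast, zpow_natCast, div_eq_mul_inv]
    have e3 : D3 ^ (-σ₃) = (D3 ^ a)⁻¹ := by
      rw [show -σ₃ = -((a : ℕ) : ℤ) by push_cast; linarith]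
      rw [_root_.zpow_neg, zpow_natCast]
    have e4 : D4 ^ (-σ₄) = D4 ^ (a + n * cn) := by
      rw [show -σ₄ = ((a + n * cn : ℕ) : ℤ) by push_cast; linarith]
      rw [zpow_natCast]
    rw [e1, e2, e3, e4]
    field_simp
    have k1 : D1 ^ b * D1⁻¹ ^ b = 1 := by rw [← mul_pow, mul_inv_cancel₀ hD1, one_pow]
    have k1' : D1 ^ (n * cn) * D1⁻¹ ^ (n * cn) = 1 := by
      rw [← mul_pow, mul_inv_cancel₀ hD1, one_pow]
    have k2 : D2 ^ cn * D2⁻¹ ^ cn = 1 := by rw [← mul_pow, mul_inv_cancel₀ hD2, one_pow]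
    have k3 : D3 ^ a * D3⁻¹ ^ a = 1 := by rw [← mul_pow, mul_inv_cancel₀ hD3, one_pow]
    linear_combination (D4 ^ a * D4 ^ (n * cn) * v₄.det ^ a * D2 ^ b * v₁.det ^ b
      * (psiS v₁ v₂ v₃ v₄).det ^ cn) * ((D1 ^ b * D1⁻¹ ^ b) * (D1 ^ (n * cn) * D1⁻¹ ^ (n * cn))
        * (D2 ^ cn * D2⁻¹ ^ cn) * k3 + (D1 ^ (n * cn) * D1⁻¹ ^ (n * cn))
        * (D2 ^ cn * D2⁻¹ ^ cn) * k1 + (D2 ^ cn * D2⁻¹ ^ cn) * k1' + k2)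
/-! ### necessity : the sum condition -/

lemma two_zpow_eq_one {E : ℤ} (h : (2:ℂ) ^ E = 1) : E = 0 := by
  have hn : ‖(2:ℂ) ^ E‖ = (1:ℝ) := by rw [h]; simp
  rw [norm_zpow] at hn
  have h2 : ‖(2:ℂ)‖ = (2:ℝ) := by norm_num
  rw [h2] at hn
  have := zpow_right_injective₀ (by norm_num : (0:ℝ) < 2) (by norm_num : (2:ℝ) ≠ 1)
  exact this (hn.trans (zpow_zero (2:ℝ)).symm)

lemma sq_necessity_sum {n : ℕ} {σ₁ σ₂ σ₃ σ₄ : ℤ}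
    (f : MvPolynomial (SqVars n n (n + 1) (n + 1)) ℂ) (hf0 : f ≠ 0)
    (hf : IsSqSemiInvariant σ₁ σ₂ σ₃ σ₄ f) :
    (n : ℤ) * σ₁ + (n : ℤ) * σ₂ + ((n : ℤ) + 1) * σ₃ + ((n : ℤ) + 1) * σ₄ = 0 := by
  obtain ⟨v₁, v₂, v₃, v₄, hv⟩ := exists_eval_ne f hf0
  set t : ℂˣ := Units.mk0 (2 : ℂ) (by norm_num) with ht
  have h := hf (sUnit t n) (sUnit t n) (sUnit t (n+1)) (sUnit t (n+1)) v₁ v₂ v₃ v₄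
  simp only [← Matrix.coe_units_inv] at h
  rw [sUnit_conj, sUnit_conj, sUnit_conj, sUnit_conj] at h
  simp only [sUnit_det] at h
  have htv : (t : ℂ) = 2 := rfl
  rw [htv] at h
  have e : ∀ (m : ℕ) (σ : ℤ), ((2:ℂ) ^ m) ^ (-σ) = (2:ℂ) ^ ((m : ℤ) * (-σ)) := by
    intro m σ
    rw [← zpow_natCast (2:ℂ) m, ← _root_.zpow_mul]
  rw [e n σ₁, e n σ₂, e (n+1) σ₃, e (n+1) σ₄] at h
  rw [← zpow_add₀ (by norm_num : (2:ℂ) ≠ 0), ← zpow_add₀ (by norm_num : (2:ℂ) ≠ 0),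
    ← zpow_add₀ (by norm_num : (2:ℂ) ≠ 0)] at h
  set E := (2:ℂ) ^ ((n : ℤ) * (-σ₁) + (n:ℤ) * (-σ₂) + (((n+1 : ℕ)) : ℤ) * (-σ₃)
      + (((n+1 : ℕ)) : ℤ) * (-σ₄)) with hE
  have h3 : (E - 1) * sqEval f v₁ v₂ v₃ v₄ = 0 := by linear_combination -h
  have h1 : E = 1 := by
    rcases mul_eq_zero.mp h3 with hh | hh
    · linear_combination hh
    · exact absurd hh hv
  rw [hE] at h1
  have h2 := two_zpow_eq_one h1
  push_cast at h2 ⊢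
  linarith

/-! ### necessity : one-parameter subgroup helpers -/

lemma helperB {a b : ℕ} (P : Matrix (Fin a) (Fin b) ℂ) (l : Fin b) (t : ℂˣ) :
    P * ((dUnit t⁻¹ l)⁻¹ : (Matrix (Fin b) (Fin b) ℂ)ˣ).val
      = Matrix.of (fun p q => if q = l then P p q * (t : ℂ) else P p q) := by
  ext p q
  rw [dUnit_inv_val, Matrix.mul_diagonal]
  by_cases h : q = l <;> simp [h]

lemma helperC {a b : ℕ} (P : Matrix (Fin a) (Fin b) ℂ) (k : Fin a) (t : ℂˣ)
    (h : ∀ q, P k q = 0) :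
    ((dUnit t⁻¹ k) : Matrix (Fin a) (Fin a) ℂ) * P = P := by
  ext p q
  rw [dUnit_val, Matrix.diagonal_mul]
  by_cases hp : p = k
  · subst hp; simp [h q]
  · simp [hp]

lemma helperA {a b : ℕ} (P : Matrix (Fin a) (Fin b) ℂ) (k : Fin a) (l : Fin b) (t : ℂˣ)
    (h : ∀ q, q ≠ l → P k q = 0) :
    ((dUnit t⁻¹ k) : Matrix (Fin a) (Fin a) ℂ) * P
        * ((dUnit t⁻¹ l)⁻¹ : (Matrix (Fin b) (Fin b) ℂ)ˣ).val
      = Matrix.of (fun p q =>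
          if p = k then (if q = l then P p q else 0)
          else (if q = l then P p q * (t : ℂ) else P p q)) := by
  ext p q
  rw [dUnit_inv_val, dUnit_val, Matrix.mul_diagonal, Matrix.diagonal_mul]
  by_cases hp : p = k <;> by_cases hq : q = l
  · subst hp; subst hq
    simp only [if_pos rfl, inv_inv, Matrix.of_apply, if_true]
    rw [Units.val_inv_eq_inv_val]
    field_simp
  · subst hp
    simp [hq, h q hq]
  · subst hq
    simp [hp, inv_inv]
  · simp [hp, hq]

/-- make a row vector supported at one coordinate by an invertible matrix -/
lemma rowSolve {m : ℕ} (hm : 0 < m) (w : Fin m → ℂ) :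
    ∃ (G : (Matrix (Fin m) (Fin m) ℂ)ˣ) (l : Fin m),
      ∀ q, q ≠ l → (∑ j, w j * ((G⁻¹ : (Matrix (Fin m) (Fin m) ℂ)ˣ).val) j q) = 0 := by
  by_cases hw : w = 0
  · exact ⟨1, ⟨0, hm⟩, fun q _ => by simp [hw]⟩
  · obtain ⟨l, hl⟩ := Function.ne_iff.mp hw
    refine ⟨rowUnit w l hl, l, fun q hq => ?_⟩
    have hrow : ∀ j, (rowUnit w l hl : Matrix (Fin m) (Fin m) ℂ) l j = w j :=
      fun j => congrFun (rowUnit_row w l hl) j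
    have : (∑ j, w j * (((rowUnit w l hl)⁻¹ : (Matrix (Fin m) (Fin m) ℂ)ˣ).val) j q)
        = ((rowUnit w l hl : Matrix (Fin m) (Fin m) ℂ)
            * ((rowUnit w l hl)⁻¹ : (Matrix (Fin m) (Fin m) ℂ)ˣ).val) l q := by
      rw [Matrix.mul_apply]
      exact Finset.sum_congr rfl fun j _ => by rw [hrow j]
    rw [this, ← Units.val_mul, mul_inv_cancel, Units.val_one, Matrix.one_apply_ne (Ne.symm hq)]

/-- evaluation of an `MvPolynomial` along a polynomial family of points -/
lemma peval_env {n₁ n₂ n₃ n₄ : ℕ} (f : MvPolynomial (SqVars n₁ n₂ n₃ n₄) ℂ)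
    (E₁ : Fin n₂ → Fin n₁ → Polynomial ℂ) (E₂ : Fin n₃ → Fin n₁ → Polynomial ℂ)
    (E₃ : Fin n₄ → Fin n₂ → Polynomial ℂ) (E₄ : Fin n₄ → Fin n₃ → Polynomial ℂ) (t : ℂ) :
    (MvPolynomial.eval₂ Polynomial.C
        (Sum.elim (fun p => E₁ p.1 p.2) <| Sum.elim (fun p => E₂ p.1 p.2) <|
          Sum.elim (fun p => E₃ p.1 p.2) (fun p => E₄ p.1 p.2)) f).eval t
      = sqEval f (Matrix.of fun p q => (E₁ p q).eval t) (Matrix.of fun p q => (E₂ p q).eval t)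
          (Matrix.of fun p q => (E₃ p q).eval t) (Matrix.of fun p q => (E₄ p q).eval t) := by
  rw [show ∀ (P : Polynomial ℂ), P.eval t = (Polynomial.evalRingHom t) P from fun _ => rfl]
  rw [MvPolynomial.eval₂_comp_left (Polynomial.evalRingHom t) Polynomial.C _ f]
  have h1 : (Polynomial.evalRingHom t).comp (Polynomial.C : ℂ →+* Polynomial ℂ)
      = RingHom.id ℂ := by
    ext a; simp
  rw [h1, sqEval_def, MvPolynomial.eval₂_id]
  have henv : (⇑(Polynomial.evalRingHom t) ∘
      ((fun p => E₁ p.1 p.2) ⊕ᵥ ((fun p => E₂ p.1 p.2) ⊕ᵥ ((fun p => E₃ p.1 p.2) ⊕ᵥ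
        fun p => E₄ p.1 p.2))))
      = sqEnv (Matrix.of fun p q => Polynomial.eval t (E₁ p q))
          (Matrix.of fun p q => Polynomial.eval t (E₂ p q))
          (Matrix.of fun p q => Polynomial.eval t (E₃ p q))
          (Matrix.of fun p q => Polynomial.eval t (E₄ p q)) := by
    funext s
    rcases s with ⟨p,q⟩|⟨p,q⟩|⟨p,q⟩|⟨p,q⟩ <;> rfl
  rw [henv]

lemma sq_necessity_3 {n : ℕ} {σ₁ σ₂ σ₃ σ₄ : ℤ}
    (f : MvPolynomial (SqVars n n (n + 1) (n + 1)) ℂ) (hf0 : f ≠ 0)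
    (hf : IsSqSemiInvariant σ₁ σ₂ σ₃ σ₄ f) : 0 ≤ σ₃ := by
  by_contra hneg
  push_neg at hneg
  apply hf0
  apply eval_all_zero
  intro v₁ v₂ v₃ v₄
  obtain ⟨u, hu0, hukill⟩ := exists_left_kill v₂
  obtain ⟨k, hk⟩ := Function.ne_iff.mp hu0
  set G := rowUnit u k hk with hG
  set w₂ := (G : Matrix (Fin (n+1)) (Fin (n+1)) ℂ) * v₂ with hw2
  set w₄ := v₄ * ((G⁻¹ : (Matrix (Fin (n+1)) (Fin (n+1)) ℂ)ˣ).val) with hw4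
  have hw2row : ∀ q, w₂ k q = 0 := by
    intro q
    rw [hw2, Matrix.mul_apply]
    have hGk : ∀ j, (G : Matrix (Fin (n+1)) (Fin (n+1)) ℂ) k j = u j :=
      fun j => congrFun (rowUnit_row u k hk) j
    calc ∑ j, (G : Matrix (Fin (n+1)) (Fin (n+1)) ℂ) k j * v₂ j q
        = ∑ j, u j * v₂ j q := Finset.sum_congr rfl fun j _ => by rw [hGk j]
      _ = 0 := hukill q
  have hfam : ∀ t : ℂˣ,
      sqEval f v₁ w₂ v₃ (Matrix.of fun p q => if q = k then w₄ p q * (t : ℂ) else w₄ p q)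
        = (t : ℂ) ^ σ₃ * sqEval f v₁ w₂ v₃ w₄ := by
    intro t
    have h := hf 1 1 (dUnit t⁻¹ k) 1 v₁ w₂ v₃ w₄
    simp only [← Matrix.coe_units_inv, Units.val_one, inv_one, Matrix.one_mul, Matrix.mul_one,
      Matrix.det_one, _root_.one_zpow, one_mul, mul_one] at h
    rw [helperC w₂ k t hw2row, helperB w₄ k t, dUnit_det] at h
    rw [Units.val_inv_eq_inv_val, _root_.inv_zpow, _root_.zpow_neg, inv_inv] at h
    exact h
  have hK : sqEval f v₁ w₂ v₃ w₄ = 0 := by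
    refine key_limit _ (sqEval f v₁ w₂ v₃ w₄) σ₃ hneg (fun t =>
      Eq.trans (peval_env f (fun p q => Polynomial.C (v₁ p q))
        (fun p q => Polynomial.C (w₂ p q)) (fun p q => Polynomial.C (v₃ p q))
        (fun p q => if q = k then Polynomial.C (w₄ p q) * Polynomial.X
          else Polynomial.C (w₄ p q)) (t : ℂ)) ?_)
    have h1 : (Matrix.of fun p q => (Polynomial.C (v₁ p q)).eval (t:ℂ)) = v₁ := by ext p q; simp
    have h2 : (Matrix.of fun p q => (Polynomial.C (w₂ p q)).eval (t:ℂ)) = w₂ := by ext p q; simp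
    have h3 : (Matrix.of fun p q => (Polynomial.C (v₃ p q)).eval (t:ℂ)) = v₃ := by ext p q; simp
    have h4 : (Matrix.of fun p q => ((if q = k then Polynomial.C (w₄ p q) * Polynomial.X
        else Polynomial.C (w₄ p q)).eval (t:ℂ)))
        = Matrix.of fun p q => if q = k then w₄ p q * (t:ℂ) else w₄ p q := by
      ext p q
      by_cases h : q = k <;> simp [h]
    rw [h1, h2, h3, h4]
    exact hfam t
  have hconst := hf 1 1 G 1 v₁ v₂ v₃ v₄
  simp only [← Matrix.coe_units_inv, Units.val_one, inv_one, Matrix.one_mul, Matrix.mul_one,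
    Matrix.det_one, _root_.one_zpow, one_mul, mul_one] at hconst
  rw [← hw2, ← hw4, hK] at hconst
  have hz : ((G : Matrix (Fin (n+1)) (Fin (n+1)) ℂ).det) ^ (-σ₃) ≠ 0 :=
    zpow_ne_zero _ (det_unit_ne_zero G)
  rcases mul_eq_zero.mp hconst.symm with h | h
  · exact absurd h hz
  · exact h

lemma sq_necessity_12 {n : ℕ} (hn : 1 ≤ n) {σ₁ σ₂ σ₃ σ₄ : ℤ}
    (f : MvPolynomial (SqVars n n (n + 1) (n + 1)) ℂ) (hf0 : f ≠ 0)
    (hf : IsSqSemiInvariant σ₁ σ₂ σ₃ σ₄ f) : 0 ≤ σ₁ + σ₂ := by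
  by_contra hneg
  push_neg at hneg
  apply hf0
  apply eval_all_zero
  intro v₁ v₂ v₃ v₄
  -- choose constants
  obtain ⟨G₁, G₂, k, hProw⟩ : ∃ (G₁ G₂ : (Matrix (Fin n) (Fin n) ℂ)ˣ) (k : Fin n),
      ∀ q, q ≠ k → ((G₂ : Matrix (Fin n) (Fin n) ℂ) * v₁
        * ((G₁⁻¹ : (Matrix (Fin n) (Fin n) ℂ)ˣ).val)) k q = 0 := by
    by_cases hv1 : IsUnit v₁
    · obtain ⟨U, hU⟩ := hv1
      refine ⟨U, 1, ⟨0, hn⟩, fun q hq => ?_⟩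
      have hval : v₁ * ((U⁻¹ : (Matrix (Fin n) (Fin n) ℂ)ˣ).val) = 1 := by
        rw [← hU, ← Units.val_mul, mul_inv_cancel, Units.val_one]
      rw [Units.val_one, Matrix.one_mul, hval]
      exact Matrix.one_apply_ne (Ne.symm hq)
    · have hdet : v₁.det = 0 := by
        by_contra hdet
        exact hv1 ((Matrix.isUnit_iff_isUnit_det v₁).mpr (Ne.isUnit hdet))
      obtain ⟨u, hu0, hu⟩ := Matrix.exists_vecMul_eq_zero_iff.mpr hdet
      obtain ⟨k, hk⟩ := Function.ne_iff.mp hu0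
      refine ⟨1, rowUnit u k hk, k, fun q _ => ?_⟩
      have h1 : ((1 : (Matrix (Fin n) (Fin n) ℂ)ˣ)⁻¹ : (Matrix (Fin n) (Fin n) ℂ)ˣ).val
          = (1 : Matrix (Fin n) (Fin n) ℂ) := by simp
      rw [h1, Matrix.mul_one, Matrix.mul_apply]
      have hGk : ∀ j, (rowUnit u k hk : Matrix (Fin n) (Fin n) ℂ) k j = u j :=
        fun j => congrFun (rowUnit_row u k hk) j
      calc ∑ j, (rowUnit u k hk : Matrix (Fin n) (Fin n) ℂ) k j * v₁ j q
          = ∑ j, u j * v₁ j q := Finset.sum_congr rfl fun j _ => by rw [hGk j]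
        _ = 0 := by
            have := congrFun hu q
            simpa [Matrix.vecMul, dotProduct] using this
  set P₁ := (G₂ : Matrix (Fin n) (Fin n) ℂ) * v₁ * ((G₁⁻¹ : (Matrix (Fin n) (Fin n) ℂ)ˣ).val)
    with hP1
  set w₂ := v₂ * ((G₁⁻¹ : (Matrix (Fin n) (Fin n) ℂ)ˣ).val) with hw2
  set w₃ := v₃ * ((G₂⁻¹ : (Matrix (Fin n) (Fin n) ℂ)ˣ).val) with hw3
  have hfam : ∀ t : ℂˣ,
      sqEval f
        (Matrix.of fun p q => if p = k then (if q = k then P₁ p q else 0)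
          else (if q = k then P₁ p q * (t : ℂ) else P₁ p q))
        (Matrix.of fun p q => if q = k then w₂ p q * (t : ℂ) else w₂ p q)
        (Matrix.of fun p q => if q = k then w₃ p q * (t : ℂ) else w₃ p q)
        v₄
        = (t : ℂ) ^ (σ₁ + σ₂) * sqEval f P₁ w₂ w₃ v₄ := by
    intro t
    have h := hf (dUnit t⁻¹ k) (dUnit t⁻¹ k) 1 1 P₁ w₂ w₃ v₄
    simp only [← Matrix.coe_units_inv, Units.val_one, inv_one, Matrix.one_mul, Matrix.mul_one,
      Matrix.det_one, _root_.one_zpow, one_mul, mul_one] at h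
    rw [helperA P₁ k k t hProw, helperB w₂ k t, helperB w₃ k t, dUnit_det] at h
    rw [Units.val_inv_eq_inv_val, _root_.inv_zpow, _root_.inv_zpow, _root_.zpow_neg,
      _root_.zpow_neg, inv_inv, inv_inv, ← zpow_add₀ (Units.ne_zero t)] at h
    exact h
  have hK : sqEval f P₁ w₂ w₃ v₄ = 0 := by
    refine key_limit _ (sqEval f P₁ w₂ w₃ v₄) (σ₁ + σ₂) hneg (fun t =>
      Eq.trans (peval_env f
        (fun p q => if p = k then (if q = k then Polynomial.C (P₁ p q) else 0)
          else (if q = k then Polynomial.C (P₁ p q) * Polynomial.X else Polynomial.C (P₁ p q)))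
        (fun p q => if q = k then Polynomial.C (w₂ p q) * Polynomial.X else Polynomial.C (w₂ p q))
        (fun p q => if q = k then Polynomial.C (w₃ p q) * Polynomial.X else Polynomial.C (w₃ p q))
        (fun p q => Polynomial.C (v₄ p q)) (t : ℂ)) ?_)
    have h1 : (Matrix.of fun p q => ((if p = k then (if q = k then Polynomial.C (P₁ p q) else 0)
        else (if q = k then Polynomial.C (P₁ p q) * Polynomial.X
          else Polynomial.C (P₁ p q))).eval (t:ℂ)))
        = Matrix.of fun p q => if p = k then (if q = k then P₁ p q else 0)
          else (if q = k then P₁ p q * (t:ℂ) else P₁ p q) := by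
      ext p q
      by_cases hp : p = k <;> by_cases hq : q = k <;> simp [hp, hq]
    have h2 : (Matrix.of fun p q => ((if q = k then Polynomial.C (w₂ p q) * Polynomial.X
        else Polynomial.C (w₂ p q)).eval (t:ℂ)))
        = Matrix.of fun p q => if q = k then w₂ p q * (t:ℂ) else w₂ p q := by
      ext p q; by_cases hq : q = k <;> simp [hq]
    have h3 : (Matrix.of fun p q => ((if q = k then Polynomial.C (w₃ p q) * Polynomial.X
        else Polynomial.C (w₃ p q)).eval (t:ℂ)))
        = Matrix.of fun p q => if q = k then w₃ p q * (t:ℂ) else w₃ p q := by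
      ext p q; by_cases hq : q = k <;> simp [hq]
    have h4 : (Matrix.of fun p q => (Polynomial.C (v₄ p q)).eval (t:ℂ)) = v₄ := by ext p q; simp
    rw [h1, h2, h3, h4]
    exact hfam t
  have hconst := hf G₁ G₂ 1 1 v₁ v₂ v₃ v₄
  simp only [← Matrix.coe_units_inv, Units.val_one, inv_one, Matrix.one_mul, Matrix.mul_one,
    Matrix.det_one, _root_.one_zpow, one_mul, mul_one] at hconst
  rw [← hP1, ← hw2, ← hw3, hK] at hconst
  have hz1 : ((G₁ : Matrix (Fin n) (Fin n) ℂ).det) ^ (-σ₁) ≠ 0 :=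
    zpow_ne_zero _ (det_unit_ne_zero G₁)
  have hz2 : ((G₂ : Matrix (Fin n) (Fin n) ℂ).det) ^ (-σ₂) ≠ 0 :=
    zpow_ne_zero _ (det_unit_ne_zero G₂)
  rcases mul_eq_zero.mp hconst.symm with h | h
  · rcases mul_eq_zero.mp h with h' | h'
    · exact absurd h' hz1
    · exact absurd h' hz2
  · exact h

lemma sq_necessity_134 {n : ℕ} (hn : 1 ≤ n) {σ₁ σ₂ σ₃ σ₄ : ℤ}
    (f : MvPolynomial (SqVars n n (n + 1) (n + 1)) ℂ) (hf0 : f ≠ 0)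
    (hf : IsSqSemiInvariant σ₁ σ₂ σ₃ σ₄ f) : 0 ≤ σ₁ + σ₃ + σ₄ := by
  by_contra hneg
  push_neg at hneg
  apply hf0
  apply eval_all_zero
  intro v₁ v₂ v₃ v₄
  -- kill v₃ from the left
  obtain ⟨u, hu0, hukill⟩ := exists_left_kill v₃
  obtain ⟨k₄, hk₄⟩ := Function.ne_iff.mp hu0
  set G₄ := rowUnit u k₄ hk₄ with hG4
  -- straighten row k₄ of G₄ v₄
  obtain ⟨G₃, k₃, hsolve₃⟩ := rowSolve (Nat.succ_pos n)
    (fun j => ((G₄ : Matrix (Fin (n+1)) (Fin (n+1)) ℂ) * v₄) k₄ j)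
  -- straighten row k₃ of G₃ v₂
  obtain ⟨G₁, k₁, hsolve₁⟩ := rowSolve (by omega : 0 < n)
    (fun j => ((G₃ : Matrix (Fin (n+1)) (Fin (n+1)) ℂ) * v₂) k₃ j)
  set P₁ := v₁ * ((G₁⁻¹ : (Matrix (Fin n) (Fin n) ℂ)ˣ).val) with hP1
  set P₂ := (G₃ : Matrix (Fin (n+1)) (Fin (n+1)) ℂ) * v₂
      * ((G₁⁻¹ : (Matrix (Fin n) (Fin n) ℂ)ˣ).val) with hP2
  set P₃ := (G₄ : Matrix (Fin (n+1)) (Fin (n+1)) ℂ) * v₃ with hP3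
  set P₄ := (G₄ : Matrix (Fin (n+1)) (Fin (n+1)) ℂ) * v₄
      * ((G₃⁻¹ : (Matrix (Fin (n+1)) (Fin (n+1)) ℂ)ˣ).val) with hP4
  have hP3row : ∀ q, P₃ k₄ q = 0 := by
    intro q
    rw [hP3, Matrix.mul_apply]
    have hGk : ∀ j, (G₄ : Matrix (Fin (n+1)) (Fin (n+1)) ℂ) k₄ j = u j :=
      fun j => congrFun (rowUnit_row u k₄ hk₄) j
    calc ∑ j, (G₄ : Matrix (Fin (n+1)) (Fin (n+1)) ℂ) k₄ j * v₃ j q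
        = ∑ j, u j * v₃ j q := Finset.sum_congr rfl fun j _ => by rw [hGk j]
      _ = 0 := hukill q
  have hP4row : ∀ q, q ≠ k₃ → P₄ k₄ q = 0 := by
    intro q hq
    rw [hP4, Matrix.mul_apply]
    exact hsolve₃ q hq
  have hP2row : ∀ q, q ≠ k₁ → P₂ k₃ q = 0 := by
    intro q hq
    rw [hP2, Matrix.mul_apply]
    exact hsolve₁ q hq
  have hfam : ∀ t : ℂˣ,
      sqEval f
        (Matrix.of fun p q => if q = k₁ then P₁ p q * (t : ℂ) else P₁ p q)
        (Matrix.of fun p q => if p = k₃ then (if q = k₁ then P₂ p q else 0)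
          else (if q = k₁ then P₂ p q * (t : ℂ) else P₂ p q))
        P₃
        (Matrix.of fun p q => if p = k₄ then (if q = k₃ then P₄ p q else 0)
          else (if q = k₃ then P₄ p q * (t : ℂ) else P₄ p q))
        = (t : ℂ) ^ (σ₁ + σ₃ + σ₄) * sqEval f P₁ P₂ P₃ P₄ := by
    intro t
    have h := hf (dUnit t⁻¹ k₁) 1 (dUnit t⁻¹ k₃) (dUnit t⁻¹ k₄) P₁ P₂ P₃ P₄
    simp only [← Matrix.coe_units_inv, Units.val_one, inv_one, Matrix.one_mul, Matrix.mul_one,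
      Matrix.det_one, _root_.one_zpow, one_mul, mul_one] at h
    rw [helperB P₁ k₁ t, helperA P₂ k₃ k₁ t hP2row, helperC P₃ k₄ t hP3row,
      helperA P₄ k₄ k₃ t hP4row, dUnit_det, dUnit_det, dUnit_det] at h
    rw [Units.val_inv_eq_inv_val, _root_.inv_zpow, _root_.inv_zpow, _root_.inv_zpow,
      _root_.zpow_neg, _root_.zpow_neg, _root_.zpow_neg, inv_inv, inv_inv, inv_inv,
      ← zpow_add₀ (Units.ne_zero t), ← zpow_add₀ (Units.ne_zero t)] at h
    exact h
  have hK : sqEval f P₁ P₂ P₃ P₄ = 0 := by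
    refine key_limit _ (sqEval f P₁ P₂ P₃ P₄) (σ₁ + σ₃ + σ₄) hneg (fun t =>
      Eq.trans (peval_env f
        (fun p q => if q = k₁ then Polynomial.C (P₁ p q) * Polynomial.X else Polynomial.C (P₁ p q))
        (fun p q => if p = k₃ then (if q = k₁ then Polynomial.C (P₂ p q) else 0)
          else (if q = k₁ then Polynomial.C (P₂ p q) * Polynomial.X else Polynomial.C (P₂ p q)))
        (fun p q => Polynomial.C (P₃ p q))
        (fun p q => if p = k₄ then (if q = k₃ then Polynomial.C (P₄ p q) else 0)
          else (if q = k₃ then Polynomial.C (P₄ p q) * Polynomial.X else Polynomial.C (P₄ p q)))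
        (t : ℂ)) ?_)
    have h1 : (Matrix.of fun p q => ((if q = k₁ then Polynomial.C (P₁ p q) * Polynomial.X
        else Polynomial.C (P₁ p q)).eval (t:ℂ)))
        = Matrix.of fun p q => if q = k₁ then P₁ p q * (t:ℂ) else P₁ p q := by
      ext p q; by_cases hq : q = k₁ <;> simp [hq]
    have h2 : (Matrix.of fun p q => ((if p = k₃ then (if q = k₁ then Polynomial.C (P₂ p q) else 0)
        else (if q = k₁ then Polynomial.C (P₂ p q) * Polynomial.X
          else Polynomial.C (P₂ p q))).eval (t:ℂ)))
        = Matrix.of fun p q => if p = k₃ then (if q = k₁ then P₂ p q else 0)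
          else (if q = k₁ then P₂ p q * (t:ℂ) else P₂ p q) := by
      ext p q; by_cases hp : p = k₃ <;> by_cases hq : q = k₁ <;> simp [hp, hq]
    have h3 : (Matrix.of fun p q => (Polynomial.C (P₃ p q)).eval (t:ℂ)) = P₃ := by ext p q; simp
    have h4 : (Matrix.of fun p q => ((if p = k₄ then (if q = k₃ then Polynomial.C (P₄ p q) else 0)
        else (if q = k₃ then Polynomial.C (P₄ p q) * Polynomial.X
          else Polynomial.C (P₄ p q))).eval (t:ℂ)))
        = Matrix.of fun p q => if p = k₄ then (if q = k₃ then P₄ p q else 0)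
          else (if q = k₃ then P₄ p q * (t:ℂ) else P₄ p q) := by
      ext p q; by_cases hp : p = k₄ <;> by_cases hq : q = k₃ <;> simp [hp, hq]
    rw [h1, h2, h3, h4]
    exact hfam t
  have hconst := hf G₁ 1 G₃ G₄ v₁ v₂ v₃ v₄
  simp only [← Matrix.coe_units_inv, Units.val_one, inv_one, Matrix.one_mul, Matrix.mul_one,
    Matrix.det_one, _root_.one_zpow, one_mul, mul_one] at hconst
  rw [← hP1, ← hP2, ← hP3, ← hP4, hK] at hconst
  have hz1 : ((G₁ : Matrix (Fin n) (Fin n) ℂ).det) ^ (-σ₁) ≠ 0 :=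
    zpow_ne_zero _ (det_unit_ne_zero G₁)
  have hz3 : ((G₃ : Matrix (Fin (n+1)) (Fin (n+1)) ℂ).det) ^ (-σ₃) ≠ 0 :=
    zpow_ne_zero _ (det_unit_ne_zero G₃)
  have hz4 : ((G₄ : Matrix (Fin (n+1)) (Fin (n+1)) ℂ).det) ^ (-σ₄) ≠ 0 :=
    zpow_ne_zero _ (det_unit_ne_zero G₄)
  rcases mul_eq_zero.mp hconst.symm with h | h
  · rcases mul_eq_zero.mp h with h' | h'
    · rcases mul_eq_zero.mp h' with h'' | h''
      · exact absurd h'' hz1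
      · exact absurd h'' hz3
    · exact absurd h' hz4
  · exact h

end

/-- for the square quiver with dimension vector `(n, n, n+1, n+1)`, a weight
`(σ₁, σ₂, σ₃, σ₄)` admits a nonzero semi-invariant iff `σ₁ + σ₂ ≥ 0`, `σ₁ + σ₃ + σ₄ ≥ 0`,
`σ₃ ≥ 0`, and `n σ₁ + n σ₂ + (n+1) σ₃ + (n+1) σ₄ = 0`. -/
theorem sq_semiinvariant_iff_nnn1n1 (n : ℕ) (hn : 1 ≤ n) (σ₁ σ₂ σ₃ σ₄ : ℤ) :
    (∃ f : MvPolynomial (SqVars n n (n + 1) (n + 1)) ℂ,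
        f ≠ 0 ∧ IsSqSemiInvariant σ₁ σ₂ σ₃ σ₄ f)
      ↔ (0 ≤ σ₁ + σ₂ ∧ 0 ≤ σ₁ + σ₃ + σ₄ ∧ 0 ≤ σ₃ ∧
          (n : ℤ) * σ₁ + (n : ℤ) * σ₂ + ((n : ℤ) + 1) * σ₃ + ((n : ℤ) + 1) * σ₄ = 0) := by
  constructor
  · rintro ⟨f, hf0, hf⟩
    exact ⟨sq_necessity_12 hn f hf0 hf, sq_necessity_134 hn f hf0 hf,
      sq_necessity_3 f hf0 hf, sq_necessity_sum f hf0 hf⟩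
  · rintro ⟨h12, h134, h3, hsum⟩
    exact sq_sufficiency n hn σ₁ σ₂ σ₃ σ₄ h12 h134 h3 hsum
end
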